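/- arXiv:2504.03326 — 6 statements merged into one kernel-verified Lean document; each statement's English description precedes it below -/
import Mathlib

section
/- Suppose conditions (C1) and (C2) hold for the fixed pair η ≤ ξ and the site x. Then the flow problem P^x is feasible, i.e., there exists a solution f : T_2^x × T_1^x → [0,∞) to P^x. -/
open scoped ENNReal

namespace IPS

/-- A change is identified with the function `δ : S → ℤ` that it adds (coordinatewise)
to a configuration.  `ChangeSet nbr x` is the set of changes involving site `x`:
add or subtract `k ≥ 1` individuals at `x`, or add `k` at `x` while subtracting `l ≥ 1`
at a neighbour `y` of `x` (or vice versa).  Note that with this encoding the maps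
`σ_{xy}^{-k,l}` and `σ_{yx}^{+l,k}` automatically coincide. -/
def ChangeSet {S : Type*} [DecidableEq S] (nbr : S → S → Prop) (x : S) : Set (S → ℤ) :=
  {δ | (∃ k : ℤ, 0 < k ∧ (δ = Pi.single x k ∨ δ = Pi.single x (-k))) ∨
       (∃ y, nbr x y ∧ ∃ k l : ℤ, 0 < k ∧ 0 < l ∧
          (δ = Pi.single x k + Pi.single y (-l) ∨ δ = Pi.single x (-k) + Pi.single y l))}

/-- The configuration resulting from applying change `δ` to `ζ`. -/
def app {S : Type*} (ζ δ : S → ℤ) : S → ℤ := ζ + δ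

/-- `δ` is applicable to `ζ` if the resulting configuration stays in `W^S`. -/
def Applicable {S : Type*} (W : Set ℤ) (ζ δ : S → ℤ) : Prop := ∀ z, ζ z + δ z ∈ W

variable {S : Type*} [DecidableEq S]

def R1 (W : Set ℤ) (nbr : S → S → Prop) (x : S) (η ξ : S → ℤ) : Set (S → ℤ) :=
  {a | a ∈ ChangeSet nbr x ∧ Applicable W η a ∧ ξ x < app η a x}

def S1 (W : Set ℤ) (nbr : S → S → Prop) (x : S) (η : S → ℤ) : Set (S → ℤ) :=
  {a | a ∈ ChangeSet nbr x ∧ Applicable W η a ∧ app η a x < η x}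

def T1 (W : Set ℤ) (nbr : S → S → Prop) (x : S) (η ξ : S → ℤ) : Set (S → ℤ) :=
  S1 W nbr x η ∪ R1 W nbr x η ξ

def R2 (W : Set ℤ) (nbr : S → S → Prop) (x : S) (η ξ : S → ℤ) : Set (S → ℤ) :=
  {b | b ∈ ChangeSet nbr x ∧ Applicable W ξ b ∧ app ξ b x < η x}

def S2 (W : Set ℤ) (nbr : S → S → Prop) (x : S) (ξ : S → ℤ) : Set (S → ℤ) :=
  {b | b ∈ ChangeSet nbr x ∧ Applicable W ξ b ∧ ξ x < app ξ b x}

def T2 (W : Set ℤ) (nbr : S → S → Prop) (x : S) (η ξ : S → ℤ) : Set (S → ℤ) :=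
  S2 W nbr x ξ ∪ R2 W nbr x η ξ

/-- `f` is a solution to the flow problem `P^x`: it is supported on pairs
`(b, a) ∈ T_2^x × T_1^x` with `η_a ≤ ξ_b`, its column sums equal `c¹_a` on `R_1^x`
and are at most `c¹_a` on `S_1^x`, and its row sums equal `c²_b` on `R_2^x` and are
at most `c²_b` on `S_2^x`. -/
structure IsSolution (W : Set ℤ) (nbr : S → S → Prop) (x : S) (η ξ : S → ℤ)
    (c1 c2 : (S → ℤ) → ℝ≥0∞) (f : (S → ℤ) → (S → ℤ) → ℝ≥0∞) : Prop where
  domain : ∀ b a, f b a ≠ 0 → b ∈ T2 W nbr x η ξ ∧ a ∈ T1 W nbr x η ξ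
  order : ∀ b a, f b a ≠ 0 → app η a ≤ app ξ b
  eq_R1 : ∀ a ∈ R1 W nbr x η ξ, ∑' b : T2 W nbr x η ξ, f b.1 a = c1 a
  le_S1 : ∀ a ∈ S1 W nbr x η, ∑' b : T2 W nbr x η ξ, f b.1 a ≤ c1 a
  eq_R2 : ∀ b ∈ R2 W nbr x η ξ, ∑' a : T1 W nbr x η ξ, f b a.1 = c2 b
  le_S2 : ∀ b ∈ S2 W nbr x ξ, ∑' a : T1 W nbr x η ξ, f b a.1 ≤ c2 b

/-- `D_1^↑`. -/
def upArrow (W : Set ℤ) (nbr : S → S → Prop) (x : S) (η ξ : S → ℤ)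
    (D : Set (S → ℤ)) : Set (S → ℤ) :=
  {b | b ∈ ChangeSet nbr x ∧ Applicable W ξ b ∧ ∃ a ∈ D, app η a ≤ app ξ b}

/-- `D_2^↓`. -/
def downArrow (W : Set ℤ) (nbr : S → S → Prop) (x : S) (η ξ : S → ℤ)
    (D : Set (S → ℤ)) : Set (S → ℤ) :=
  {a | a ∈ ChangeSet nbr x ∧ Applicable W η a ∧ ∃ b ∈ D, app η a ≤ app ξ b}

/-- Condition (C1). -/
def CondC1 (W : Set ℤ) (nbr : S → S → Prop) (x : S) (η ξ : S → ℤ)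
    (c1 c2 : (S → ℤ) → ℝ≥0∞) : Prop :=
  ∀ D1 ⊆ R1 W nbr x η ξ, ∑' a : D1, c1 a.1 ≤ ∑' b : upArrow W nbr x η ξ D1, c2 b.1

/-- Condition (C2). -/
def CondC2 (W : Set ℤ) (nbr : S → S → Prop) (x : S) (η ξ : S → ℤ)
    (c1 c2 : (S → ℤ) → ℝ≥0∞) : Prop :=
  ∀ D2 ⊆ R2 W nbr x η ξ, ∑' b : D2, c2 b.1 ≤ ∑' a : downArrow W nbr x η ξ D2, c1 a.1

/-- `C^{+x}` for the configuration `ζ`. -/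
def Cplus (W : Set ℤ) (nbr : S → S → Prop) (x : S) (ζ : S → ℤ) : Set (S → ℤ) :=
  {a | a ∈ ChangeSet nbr x ∧ Applicable W ζ a ∧ ζ x < app ζ a x ∧ ∀ z, z ≠ x → app ζ a z = ζ z}

/-- `C^{-x}` for the configuration `ζ`. -/
def Cminus (W : Set ℤ) (nbr : S → S → Prop) (x : S) (ζ : S → ℤ) : Set (S → ℤ) :=
  {a | a ∈ ChangeSet nbr x ∧ Applicable W ζ a ∧ app ζ a x < ζ x ∧ ∀ z, z ≠ x → app ζ a z = ζ z}

/-- `C^{+xy}` for the configuration `ζ`. -/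
def CplusPair (W : Set ℤ) (nbr : S → S → Prop) (x : S) (ζ : S → ℤ) (y : S) : Set (S → ℤ) :=
  {a | a ∈ ChangeSet nbr x ∧ Applicable W ζ a ∧ ζ x < app ζ a x ∧ app ζ a y < ζ y}

/-- `C^{-xy}` for the configuration `ζ`. -/
def CminusPair (W : Set ℤ) (nbr : S → S → Prop) (x : S) (ζ : S → ℤ) (y : S) : Set (S → ℤ) :=
  {a | a ∈ ChangeSet nbr x ∧ Applicable W ζ a ∧ app ζ a x < ζ x ∧ ζ y < app ζ a y}

/-- `C^{+x•}` for the configuration `ζ`. -/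
def CplusBull (W : Set ℤ) (nbr : S → S → Prop) (x : S) (ζ : S → ℤ) : Set (S → ℤ) :=
  {a | ∃ y, nbr x y ∧ a ∈ CplusPair W nbr x ζ y}

/-- `C^{-x•}` for the configuration `ζ`. -/
def CminusBull (W : Set ℤ) (nbr : S → S → Prop) (x : S) (ζ : S → ℤ) : Set (S → ℤ) :=
  {a | ∃ y, nbr x y ∧ a ∈ CminusPair W nbr x ζ y}

/-- `G_1^e`: the changes of `C` (for the first process) that preserve the order. -/
def G1 (η ξ : S → ℤ) (C : Set (S → ℤ)) : Set (S → ℤ) := {a | a ∈ C ∧ app η a ≤ ξ}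

/-- `B_1^e`: the changes of `C` (for the first process) that break the order. -/
def B1 (η ξ : S → ℤ) (C : Set (S → ℤ)) : Set (S → ℤ) := {a | a ∈ C ∧ ¬ app η a ≤ ξ}

/-- `G_2^e`: the changes of `C` (for the second process) that preserve the order. -/
def G2 (η ξ : S → ℤ) (C : Set (S → ℤ)) : Set (S → ℤ) := {b | b ∈ C ∧ η ≤ app ξ b}

/-- `B_2^e`: the changes of `C` (for the second process) that break the order. -/
def B2 (η ξ : S → ℤ) (C : Set (S → ℤ)) : Set (S → ℤ) := {b | b ∈ C ∧ ¬ η ≤ app ξ b}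



open Finset Filter Topology
open scoped NNReal

section FiniteSD

attribute [local instance 10] Classical.propDecidable
set_option linter.unusedSectionVars false

variable {α β : Type*} [Fintype α] [Fintype β]

noncomputable def NB (R : β → α → Prop) (D : Finset α) : Finset β :=
  Finset.univ.filter (fun b => ∃ a ∈ D, R b a)

lemma mem_NB {R : β → α → Prop} {D : Finset α} {b : β} :
    b ∈ NB R D ↔ ∃ a ∈ D, R b a := by
  classical
  simp [NB]

lemma NB_mono {R : β → α → Prop} {D D' : Finset α} (h : D ⊆ D') : NB R D ⊆ NB R D' := by
  intro b hb
  rcases mem_NB.mp hb with ⟨a, ha, hR⟩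
  exact mem_NB.mpr ⟨a, h ha, hR⟩

lemma NB_union {R : β → α → Prop} {D D' : Finset α} :
    NB R (D ∪ D') = NB R D ∪ NB R D' := by
  ext b
  simp only [mem_NB, mem_union, Finset.mem_union]
  constructor
  · rintro ⟨a, ha | ha, hR⟩
    · exact Or.inl ⟨a, ha, hR⟩
    · exact Or.inr ⟨a, ha, hR⟩
  · rintro (⟨a, ha, hR⟩ | ⟨a, ha, hR⟩)
    · exact ⟨a, Or.inl ha, hR⟩
    · exact ⟨a, Or.inr ha, hR⟩

lemma hall_restrict (R : β → α → Prop) (d : α → ℝ≥0) (s : β → ℝ≥0)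
    (hall : ∀ D : Finset α, ∑ a ∈ D, d a ≤ ∑ b ∈ NB R D, s b) (D : Finset α) :
    ∀ D' : Finset α, ∑ a ∈ D', (if a ∈ D then d a else 0)
      ≤ ∑ b ∈ NB R D', (if b ∈ NB R D then s b else 0) := by
  classical
  intro D'
  have h1 : ∑ a ∈ D', (if a ∈ D then d a else 0) = ∑ a ∈ D' ∩ D, d a :=
    Finset.sum_ite_mem _ _ _
  have h2 : ∑ b ∈ NB R D', (if b ∈ NB R D then s b else 0) = ∑ b ∈ NB R D' ∩ NB R D, s b :=
    Finset.sum_ite_mem _ _ _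
  rw [h1, h2]
  refine (hall (D' ∩ D)).trans (Finset.sum_le_sum_of_subset ?_)
  intro b hb
  rcases mem_NB.mp hb with ⟨a, ha, hR⟩
  exact mem_inter.mpr ⟨mem_NB.mpr ⟨a, (mem_inter.mp ha).1, hR⟩, mem_NB.mpr ⟨a, (mem_inter.mp ha).2, hR⟩⟩

lemma hall_compl (R : β → α → Prop) (d : α → ℝ≥0) (s : β → ℝ≥0)
    (hall : ∀ D : Finset α, ∑ a ∈ D, d a ≤ ∑ b ∈ NB R D, s b) (D : Finset α)
    (htight : ∑ a ∈ D, d a = ∑ b ∈ NB R D, s b) :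
    ∀ D' : Finset α, ∑ a ∈ D', (if a ∈ D then 0 else d a)
      ≤ ∑ b ∈ NB R D', (if b ∈ NB R D then 0 else s b) := by
  classical
  intro D'
  have h1 : ∑ a ∈ D', (if a ∈ D then 0 else d a) = ∑ a ∈ D' \ D, d a := by
    rw [Finset.sdiff_eq_filter, Finset.sum_filter]
    exact Finset.sum_congr rfl (fun a _ => by by_cases h : a ∈ D <;> simp [h])
  have h2 : ∑ b ∈ NB R D', (if b ∈ NB R D then 0 else s b) = ∑ b ∈ NB R D' \ NB R D, s b := by
    rw [Finset.sdiff_eq_filter, Finset.sum_filter]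
    exact Finset.sum_congr rfl (fun b _ => by by_cases h : b ∈ NB R D <;> simp [h])
  rw [h1, h2]
  have key := hall (D ∪ D')
  have hL : ∑ a ∈ D ∪ D', d a = ∑ a ∈ D, d a + ∑ a ∈ D' \ D, d a := by
    rw [← Finset.union_sdiff_self_eq_union, Finset.sum_union disjoint_sdiff]
  have hR : ∑ b ∈ NB R (D ∪ D'), s b
      = ∑ b ∈ NB R D, s b + ∑ b ∈ NB R D' \ NB R D, s b := by
    rw [NB_union, ← Finset.union_sdiff_self_eq_union, Finset.sum_union disjoint_sdiff]
  rw [hL, hR, htight, add_le_add_iff_left] at key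
  exact key

lemma combine_split (R : β → α → Prop) (d : α → ℝ≥0) (s : β → ℝ≥0) (D : Finset α)
    (h1 : ∃ f : β → α → ℝ≥0, (∀ b a, ¬R b a → f b a = 0) ∧
      (∀ a, ∑ b, f b a = (if a ∈ D then d a else 0)) ∧
      (∀ b, ∑ a, f b a ≤ (if b ∈ NB R D then s b else 0)))
    (h2 : ∃ f : β → α → ℝ≥0, (∀ b a, ¬R b a → f b a = 0) ∧
      (∀ a, ∑ b, f b a = (if a ∈ D then 0 else d a)) ∧
      (∀ b, ∑ a, f b a ≤ (if b ∈ NB R D then 0 else s b))) :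
    ∃ f : β → α → ℝ≥0, (∀ b a, ¬R b a → f b a = 0) ∧
      (∀ a, ∑ b, f b a = d a) ∧ (∀ b, ∑ a, f b a ≤ s b) := by
  classical
  obtain ⟨f1, hs1, hc1, hr1⟩ := h1
  obtain ⟨f2, hs2, hc2, hr2⟩ := h2
  refine ⟨fun b a => f1 b a + f2 b a, ?_, ?_, ?_⟩
  · intro b a h; show f1 b a + f2 b a = 0; rw [hs1 _ _ h, hs2 _ _ h, add_zero]
  · intro a
    show ∑ b, (f1 b a + f2 b a) = d a
    rw [Finset.sum_add_distrib, hc1, hc2]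
    by_cases h : a ∈ D <;> simp [h]
  · intro b
    show ∑ a, (f1 b a + f2 b a) ≤ s b
    rw [Finset.sum_add_distrib]
    refine (add_le_add (hr1 b) (hr2 b)).trans ?_
    by_cases h : b ∈ NB R D <;> simp [h]

lemma extend_step (R : β → α → Prop) (d : α → ℝ≥0) (s : β → ℝ≥0)
    (a0 : α) (b0 : β) (hR : R b0 a0) (ε : ℝ≥0) (hεd : ε ≤ d a0) (hεs : ε ≤ s b0)
    (h : ∃ f : β → α → ℝ≥0, (∀ b a, ¬R b a → f b a = 0) ∧
      (∀ a, ∑ b, f b a = (if a = a0 then d a - ε else d a)) ∧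
      (∀ b, ∑ a, f b a ≤ (if b = b0 then s b - ε else s b))) :
    ∃ f : β → α → ℝ≥0, (∀ b a, ¬R b a → f b a = 0) ∧
      (∀ a, ∑ b, f b a = d a) ∧ (∀ b, ∑ a, f b a ≤ s b) := by
  classical
  obtain ⟨f, hsupp, hcol, hrow⟩ := h
  refine ⟨fun b a => f b a + (if b = b0 then (if a = a0 then ε else 0) else 0), ?_, ?_, ?_⟩
  · intro b a h
    show f b a + _ = 0
    rw [hsupp _ _ h]
    by_cases hb : b = b0
    · by_cases ha : a = a0
      · exact absurd (hb ▸ ha ▸ hR) h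
      · simp [hb, ha]
    · simp [hb]
  · intro a
    show ∑ b, (f b a + _) = d a
    rw [Finset.sum_add_distrib, hcol, Finset.sum_ite_eq' Finset.univ b0
      (fun _ => if a = a0 then ε else 0)]
    by_cases ha : a = a0
    · subst ha; simp [tsub_add_cancel_of_le hεd]
    · simp [ha]
  · intro b
    show ∑ a, (f b a + _) ≤ s b
    rw [Finset.sum_add_distrib]
    by_cases hb : b = b0
    · have h1 : ∑ a, (if a = a0 then ε else 0) = ε := by
        rw [Finset.sum_ite_eq' Finset.univ a0 (fun _ => ε)]; simp
      simp only [if_pos hb, h1]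
      have h2 := hrow b; rw [if_pos hb] at h2
      calc ∑ a, f b a + ε ≤ (s b - ε) + ε := add_le_add_left h2 ε
        _ = s b := tsub_add_cancel_of_le (hb ▸ hεs)
    · have : ∑ a, (if b = b0 then (if a = a0 then ε else 0) else 0) = 0 := by simp [hb]
      rw [this, add_zero]
      have := hrow b; rw [if_neg hb] at this; exact this

lemma route_hall (R : β → α → Prop) (d : α → ℝ≥0) (s : β → ℝ≥0)
    (hall : ∀ D : Finset α, ∑ a ∈ D, d a ≤ ∑ b ∈ NB R D, s b)
    (a0 : α) (b0 : β) (ε : ℝ≥0) (hεd : ε ≤ d a0) (hεs : ε ≤ s b0)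
    (hkey : ∀ D : Finset α, D ⊆ Finset.univ.filter (fun a => d a ≠ 0) → a0 ∉ D →
      b0 ∈ NB R D → ε + ∑ a ∈ D, d a ≤ ∑ b ∈ NB R D, s b) :
    ∀ D : Finset α, ∑ a ∈ D, (if a = a0 then d a - ε else d a)
      ≤ ∑ b ∈ NB R D, (if b = b0 then s b - ε else s b) := by
  classical
  intro D
  -- generic bounds
  have hLle : ∑ a ∈ D, (if a = a0 then d a - ε else d a) ≤ ∑ a ∈ D, d a :=
    Finset.sum_le_sum (fun a _ => by by_cases h : a = a0 <;> simp [h, tsub_le_self])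
  by_cases hb : b0 ∈ NB R D
  · -- RHS = ∑ s - ε in the sense RHS + ε = ∑ s
    have hRadd : (∑ b ∈ NB R D, (if b = b0 then s b - ε else s b)) + ε = ∑ b ∈ NB R D, s b := by
      rw [← Finset.sum_erase_add _ _ hb, ← Finset.sum_erase_add _ s hb, if_pos rfl]
      have : ∑ b ∈ (NB R D).erase b0, (if b = b0 then s b - ε else s b)
          = ∑ b ∈ (NB R D).erase b0, s b :=
        Finset.sum_congr rfl (fun b hbe => if_neg (Finset.ne_of_mem_erase hbe))
      rw [this, add_assoc, tsub_add_cancel_of_le hεs]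
    by_cases ha : a0 ∈ D
    · have hLadd : (∑ a ∈ D, (if a = a0 then d a - ε else d a)) + ε = ∑ a ∈ D, d a := by
        rw [← Finset.sum_erase_add _ _ ha, ← Finset.sum_erase_add _ d ha, if_pos rfl]
        have : ∑ a ∈ D.erase a0, (if a = a0 then d a - ε else d a)
            = ∑ a ∈ D.erase a0, d a :=
          Finset.sum_congr rfl (fun a hae => if_neg (Finset.ne_of_mem_erase hae))
        rw [this, add_assoc, tsub_add_cancel_of_le hεd]
      have : (∑ a ∈ D, (if a = a0 then d a - ε else d a)) + ε
          ≤ (∑ b ∈ NB R D, (if b = b0 then s b - ε else s b)) + ε := by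
        rw [hLadd, hRadd]; exact hall D
      exact le_of_add_le_add_right this
    · -- a0 ∉ D, b0 ∈ NB R D : key case
      have hLeq : ∑ a ∈ D, (if a = a0 then d a - ε else d a) = ∑ a ∈ D, d a :=
        Finset.sum_congr rfl (fun a haD => if_neg (fun (h : a = a0) => ha (h ▸ haD)))
      have hkey' : ε + ∑ a ∈ D, d a ≤ ∑ b ∈ NB R D, s b := by
        set D₀ := D.filter (fun a => d a ≠ 0) with hD₀
        have hsum0 : ∑ a ∈ D₀, d a = ∑ a ∈ D, d a := Finset.sum_filter_ne_zero D
        have hD₀sub : D₀ ⊆ Finset.univ.filter (fun a => d a ≠ 0) := by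
          intro a haa
          simp only [hD₀, Finset.mem_filter] at haa ⊢
          exact ⟨Finset.mem_univ a, haa.2⟩
        have ha₀ : a0 ∉ D₀ := fun h => ha (Finset.filter_subset _ _ h)
        have hNBsub : NB R D₀ ⊆ NB R D := NB_mono (Finset.filter_subset _ _)
        by_cases hb₀ : b0 ∈ NB R D₀
        · calc ε + ∑ a ∈ D, d a = ε + ∑ a ∈ D₀, d a := by rw [hsum0]
            _ ≤ ∑ b ∈ NB R D₀, s b := hkey D₀ hD₀sub ha₀ hb₀
            _ ≤ ∑ b ∈ NB R D, s b := Finset.sum_le_sum_of_subset hNBsub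
        · have h1 : ∑ a ∈ D₀, d a ≤ ∑ b ∈ NB R D₀, s b := hall D₀
          have h2 : insert b0 (NB R D₀) ⊆ NB R D := by
            intro b hbb
            rcases Finset.mem_insert.mp hbb with rfl | hbb
            · exact hb
            · exact hNBsub hbb
          calc ε + ∑ a ∈ D, d a = ε + ∑ a ∈ D₀, d a := by rw [hsum0]
            _ ≤ s b0 + ∑ b ∈ NB R D₀, s b := add_le_add hεs h1
            _ = ∑ b ∈ insert b0 (NB R D₀), s b := (Finset.sum_insert hb₀).symm
            _ ≤ ∑ b ∈ NB R D, s b := Finset.sum_le_sum_of_subset h2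
      rw [hLeq]
      have : (∑ a ∈ D, d a) + ε ≤ (∑ b ∈ NB R D, (if b = b0 then s b - ε else s b)) + ε := by
        rw [hRadd, add_comm (∑ a ∈ D, d a) ε]; exact hkey'
      exact le_of_add_le_add_right this
  · have hReq : ∑ b ∈ NB R D, (if b = b0 then s b - ε else s b) = ∑ b ∈ NB R D, s b :=
      Finset.sum_congr rfl (fun b hbD => if_neg (fun (h : b = b0) => hb (h ▸ hbD)))
    rw [hReq]
    exact hLle.trans (hall D)

theorem finite_sd (R : β → α → Prop) (d : α → ℝ≥0) (s : β → ℝ≥0)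
    (hall : ∀ D : Finset α, ∑ a ∈ D, d a ≤ ∑ b ∈ NB R D, s b) :
    ∃ f : β → α → ℝ≥0, (∀ b a, ¬ R b a → f b a = 0) ∧
      (∀ a, ∑ b, f b a = d a) ∧ (∀ b, ∑ a, f b a ≤ s b) := by
  suffices H : ∀ n : ℕ, ∀ (d : α → ℝ≥0) (s : β → ℝ≥0),
      (Finset.univ.filter fun a => d a ≠ 0).card + (Finset.univ.filter fun b => s b ≠ 0).card ≤ n →
      (∀ D : Finset α, ∑ a ∈ D, d a ≤ ∑ b ∈ NB R D, s b) →
      ∃ f : β → α → ℝ≥0, (∀ b a, ¬ R b a → f b a = 0) ∧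
        (∀ a, ∑ b, f b a = d a) ∧ (∀ b, ∑ a, f b a ≤ s b) by
    exact H _ d s le_rfl hall
  intro n
  induction n with
  | zero =>
    intro d s hn _
    have hd0 : ∀ a, d a = 0 := by
      intro a
      by_contra h
      have hmem : a ∈ Finset.univ.filter fun a => d a ≠ 0 :=
        Finset.mem_filter.mpr ⟨Finset.mem_univ a, h⟩
      have hcard : (Finset.univ.filter fun a => d a ≠ 0).card = 0 := by omega
      rw [Finset.card_eq_zero.mp hcard] at hmem
      exact absurd hmem (Finset.notMem_empty a)
    exact ⟨fun _ _ => 0, fun _ _ _ => rfl, fun a => by simp [hd0 a], fun b => by simp⟩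
  | succ n ih =>
    intro d s hn hall
    by_cases hd0 : ∀ a, d a = 0
    · exact ⟨fun _ _ => 0, fun _ _ _ => rfl, fun a => by simp [hd0 a], fun b => by simp⟩
    set SD := Finset.univ.filter (fun a => d a ≠ 0) with hSDdef
    set PS := Finset.univ.filter (fun b => s b ≠ 0) with hPSdef
    by_cases htight : ∃ D : Finset α, D ⊆ SD ∧ D.Nonempty ∧ D ≠ SD ∧
        ∑ a ∈ D, d a = ∑ b ∈ NB R D, s b
    · obtain ⟨D, hDsub, hDne, hDprop, htD⟩ := htight
      have hcard1 : D.card < SD.card :=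
        Finset.card_lt_card (Finset.ssubset_iff_subset_ne.mpr ⟨hDsub, hDprop⟩)
      refine combine_split R d s D
        (ih _ _ ?_ (hall_restrict R d s hall D)) (ih _ _ ?_ (hall_compl R d s hall D htD))
      · have h1 : (Finset.univ.filter fun a => (if a ∈ D then d a else 0) ≠ 0) ⊆ D := by
          intro a ha
          rcases Finset.mem_filter.mp ha with ⟨-, ha⟩
          by_contra h; simp [h] at ha
        have h2 : (Finset.univ.filter fun b => (if b ∈ NB R D then s b else 0) ≠ 0) ⊆ PS := by
          intro b hb
          rcases Finset.mem_filter.mp hb with ⟨-, hb⟩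
          refine Finset.mem_filter.mpr ⟨Finset.mem_univ b, fun h => hb ?_⟩
          rw [h]; simp
        have e1 := Finset.card_le_card h1
        have e2 := Finset.card_le_card h2
        omega
      · have h1 : (Finset.univ.filter fun a => (if a ∈ D then 0 else d a) ≠ 0) ⊆ SD \ D := by
          intro a ha
          rcases Finset.mem_filter.mp ha with ⟨-, ha⟩
          by_cases h : a ∈ D
          · simp [h] at ha
          · rw [if_neg h] at ha
            exact Finset.mem_sdiff.mpr ⟨Finset.mem_filter.mpr ⟨Finset.mem_univ a, ha⟩, h⟩
        have h2 : (Finset.univ.filter fun b => (if b ∈ NB R D then 0 else s b) ≠ 0) ⊆ PS := by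
          intro b hb
          rcases Finset.mem_filter.mp hb with ⟨-, hb⟩
          refine Finset.mem_filter.mpr ⟨Finset.mem_univ b, fun h => hb ?_⟩
          rw [h]; simp
        have e1 := Finset.card_le_card h1
        have e2 := Finset.card_le_card h2
        have e3 : (SD \ D).card = SD.card - D.card := Finset.card_sdiff_of_subset hDsub
        have e4 : 1 ≤ D.card := Finset.card_pos.mpr hDne
        omega
    · obtain ⟨a0, ha0⟩ := not_forall.mp hd0
      have ha0SD : a0 ∈ SD := Finset.mem_filter.mpr ⟨Finset.mem_univ a0, ha0⟩
      have hallA0 := hall {a0}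
      rw [Finset.sum_singleton] at hallA0
      have hSne : ∑ b ∈ NB R {a0}, s b ≠ 0 := by
        intro h
        rw [h] at hallA0
        exact ha0 (le_antisymm hallA0 zero_le)
      obtain ⟨b0, hb0NB, hb0⟩ := Finset.exists_ne_zero_of_sum_ne_zero hSne
      have hb0PS : b0 ∈ PS := Finset.mem_filter.mpr ⟨Finset.mem_univ b0, hb0⟩
      have hRb0 : R b0 a0 := by
        rcases mem_NB.mp hb0NB with ⟨a, ha, hR⟩
        rw [Finset.mem_singleton] at ha
        exact ha ▸ hR
      have hSDpos : 1 ≤ SD.card := Finset.card_pos.mpr ⟨a0, ha0SD⟩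
      have hPSpos : 1 ≤ PS.card := Finset.card_pos.mpr ⟨b0, hb0PS⟩
      -- a generic "route & recurse" step, for any admissible ε
      have hroute : ∀ ε : ℝ≥0, ε ≤ d a0 → ε ≤ s b0 →
          (∀ D : Finset α, D ⊆ SD → a0 ∉ D → b0 ∈ NB R D →
            ε + ∑ a ∈ D, d a ≤ ∑ b ∈ NB R D, s b) →
          (∃ f : β → α → ℝ≥0, (∀ b a, ¬ R b a → f b a = 0) ∧
            (∀ a, ∑ b, f b a = (if a = a0 then d a - ε else d a)) ∧
            (∀ b, ∑ a, f b a ≤ (if b = b0 then s b - ε else s b))) →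
          ∃ f : β → α → ℝ≥0, (∀ b a, ¬ R b a → f b a = 0) ∧
            (∀ a, ∑ b, f b a = d a) ∧ (∀ b, ∑ a, f b a ≤ s b) := by
        intro ε hεd hεs _ hsol
        exact extend_step R d s a0 b0 hRb0 ε hεd hεs hsol
      -- support bounds for the routed instance
      have hsuppd' : ∀ ε : ℝ≥0,
          (Finset.univ.filter fun a => (if a = a0 then d a - ε else d a) ≠ 0) ⊆ SD := by
        intro ε a ha
        rcases Finset.mem_filter.mp ha with ⟨-, ha⟩
        refine Finset.mem_filter.mpr ⟨Finset.mem_univ a, fun h => ha ?_⟩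
        by_cases h' : a = a0
        · subst h'; simp [h, zero_tsub]
        · simp [h', h]
      have hsupps' : ∀ ε : ℝ≥0,
          (Finset.univ.filter fun b => (if b = b0 then s b - ε else s b) ≠ 0) ⊆ PS := by
        intro ε b hbmem
        rcases Finset.mem_filter.mp hbmem with ⟨-, hbb⟩
        refine Finset.mem_filter.mpr ⟨Finset.mem_univ b, fun h => hbb ?_⟩
        by_cases h' : b = b0
        · subst h'; simp [h, zero_tsub]
        · simp [h', h]
      by_cases hok : ∀ D : Finset α, D ⊆ SD → a0 ∉ D → b0 ∈ NB R D →
          min (d a0) (s b0) + ∑ a ∈ D, d a ≤ ∑ b ∈ NB R D, s b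
      · set m := min (d a0) (s b0) with hmdef
        have hall' := route_hall R d s hall a0 b0 m (min_le_left _ _) (min_le_right _ _)
          (fun D h1 h2 h3 => hok D h1 h2 h3)
        refine hroute m (min_le_left _ _) (min_le_right _ _) hok (ih _ _ ?_ hall')
        rcases le_total (d a0) (s b0) with hc | hc
        · have hz : (if a0 = a0 then d a0 - m else d a0) = 0 := by
            rw [if_pos rfl, hmdef, min_eq_left hc, tsub_self]
          have hsub : (Finset.univ.filter fun a => (if a = a0 then d a - m else d a) ≠ 0)
              ⊆ SD.erase a0 := by
            intro a ha
            refine Finset.mem_erase.mpr ⟨?_, hsuppd' m ha⟩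
            rcases Finset.mem_filter.mp ha with ⟨-, ha⟩
            intro h; rw [h] at ha; exact ha hz
          have e1 := Finset.card_le_card hsub
          have e2 := Finset.card_le_card (hsupps' m)
          have e3 : (SD.erase a0).card = SD.card - 1 := Finset.card_erase_of_mem ha0SD
          omega
        · have hz : (if b0 = b0 then s b0 - m else s b0) = 0 := by
            rw [if_pos rfl, hmdef, min_eq_right hc, tsub_self]
          have hsub : (Finset.univ.filter fun b => (if b = b0 then s b - m else s b) ≠ 0)
              ⊆ PS.erase b0 := by
            intro b hbmem
            refine Finset.mem_erase.mpr ⟨?_, hsupps' m hbmem⟩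
            rcases Finset.mem_filter.mp hbmem with ⟨-, hbb⟩
            intro h; rw [h] at hbb; exact hbb hz
          have e1 := Finset.card_le_card (hsuppd' m)
          have e2 := Finset.card_le_card hsub
          have e3 : (PS.erase b0).card = PS.card - 1 := Finset.card_erase_of_mem hb0PS
          omega
      · push_neg at hok
        obtain ⟨D₀, hD₀sub, hD₀a0, hD₀b0, hD₀lt⟩ := hok
        set 𝒟 := SD.powerset.filter (fun D => a0 ∉ D ∧ b0 ∈ NB R D) with h𝒟def
        have hD₀mem : D₀ ∈ 𝒟 := by
          rw [h𝒟def, Finset.mem_filter, Finset.mem_powerset]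
          exact ⟨hD₀sub, hD₀a0, hD₀b0⟩
        obtain ⟨Dm, hDmmem, hDmmin⟩ := Finset.exists_min_image 𝒟
          (fun D => ∑ b ∈ NB R D, s b - ∑ a ∈ D, d a) ⟨D₀, hD₀mem⟩
        have hDmsub : Dm ⊆ SD := Finset.mem_powerset.mp (Finset.mem_filter.mp hDmmem).1
        have hDma0 : a0 ∉ Dm := (Finset.mem_filter.mp hDmmem).2.1
        have hDmb0 : b0 ∈ NB R Dm := (Finset.mem_filter.mp hDmmem).2.2
        have hDmne : Dm.Nonempty := by
          rcases Finset.eq_empty_or_nonempty Dm with rfl | h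
          · rcases mem_NB.mp hDmb0 with ⟨a, ha, -⟩
            exact absurd ha (Finset.notMem_empty a)
          · exact h
        set ε := ∑ b ∈ NB R Dm, s b - ∑ a ∈ Dm, d a with hεdef
        have hεlt : ε < min (d a0) (s b0) := by
          refine lt_of_le_of_lt (hDmmin D₀ hD₀mem) ?_
          rw [tsub_lt_iff_right (hall D₀)]
          exact hD₀lt
        have hεd : ε ≤ d a0 := (hεlt.trans_le (min_le_left _ _)).le
        have hεs : ε ≤ s b0 := (hεlt.trans_le (min_le_right _ _)).le
        have hεd' : ε < d a0 := hεlt.trans_le (min_le_left _ _)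
        have hkey : ∀ D : Finset α, D ⊆ SD → a0 ∉ D → b0 ∈ NB R D →
            ε + ∑ a ∈ D, d a ≤ ∑ b ∈ NB R D, s b := by
          intro D h1 h2 h3
          have hmem : D ∈ 𝒟 := by
            rw [h𝒟def, Finset.mem_filter, Finset.mem_powerset]; exact ⟨h1, h2, h3⟩
          have := hDmmin D hmem
          calc ε + ∑ a ∈ D, d a ≤ (∑ b ∈ NB R D, s b - ∑ a ∈ D, d a) + ∑ a ∈ D, d a :=
                add_le_add_left this _
            _ = ∑ b ∈ NB R D, s b := tsub_add_cancel_of_le (hall D)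
        have hall' := route_hall R d s hall a0 b0 ε hεd hεs hkey
        refine hroute ε hεd hεs hkey ?_
        -- the routed instance has a tight set Dm; split it
        set d' := fun a => if a = a0 then d a - ε else d a with hd'def
        set s' := fun b => if b = b0 then s b - ε else s b with hs'def
        have htight' : ∑ a ∈ Dm, d' a = ∑ b ∈ NB R Dm, s' b := by
          have hL : ∑ a ∈ Dm, d' a = ∑ a ∈ Dm, d a :=
            Finset.sum_congr rfl (fun a haD => if_neg (fun (h : a = a0) => hDma0 (h ▸ haD)))
          have hRadd : (∑ b ∈ NB R Dm, s' b) + ε = ∑ b ∈ NB R Dm, s b := by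
            rw [← Finset.sum_erase_add _ _ hDmb0, ← Finset.sum_erase_add _ s hDmb0]
            have : ∑ b ∈ (NB R Dm).erase b0, s' b = ∑ b ∈ (NB R Dm).erase b0, s b :=
              Finset.sum_congr rfl (fun b hbe => if_neg (Finset.ne_of_mem_erase hbe))
            have hs'b0 : s' b0 = s b0 - ε := if_pos rfl
            rw [this, hs'b0, add_assoc, tsub_add_cancel_of_le hεs]
          have hLadd : (∑ a ∈ Dm, d a) + ε = ∑ b ∈ NB R Dm, s b := by
            rw [hεdef, add_comm]
            exact tsub_add_cancel_of_le (hall Dm)  -- ε + ∑ d = ∑ s ?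
          have : (∑ a ∈ Dm, d' a) + ε = (∑ b ∈ NB R Dm, s' b) + ε := by
            rw [hL, hRadd, hLadd]
          exact add_right_cancel this
        refine combine_split R d' s' Dm
          (ih _ _ ?_ (hall_restrict R d' s' hall' Dm)) (ih _ _ ?_ (hall_compl R d' s' hall' Dm htight'))
        · have h1 : (Finset.univ.filter fun a => (if a ∈ Dm then d' a else 0) ≠ 0) ⊆ Dm := by
            intro a ha
            rcases Finset.mem_filter.mp ha with ⟨-, ha⟩
            by_contra h; simp [h] at ha
          have h2 : (Finset.univ.filter fun b => (if b ∈ NB R Dm then s' b else 0) ≠ 0)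
              ⊆ PS := by
            intro b hbmem
            rcases Finset.mem_filter.mp hbmem with ⟨-, hbb⟩
            by_cases h : b ∈ NB R Dm
            · rw [if_pos h] at hbb
              exact hsupps' ε (Finset.mem_filter.mpr ⟨Finset.mem_univ b, hbb⟩)
            · simp [h] at hbb
          have e1 := Finset.card_le_card h1
          have e2 := Finset.card_le_card h2
          have e3 : Dm.card < SD.card := Finset.card_lt_card
            (Finset.ssubset_iff_of_subset hDmsub |>.mpr ⟨a0, ha0SD, hDma0⟩)
          omega
        · have h1 : (Finset.univ.filter fun a => (if a ∈ Dm then 0 else d' a) ≠ 0)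
              ⊆ SD \ Dm := by
            intro a ha
            rcases Finset.mem_filter.mp ha with ⟨-, ha⟩
            by_cases h : a ∈ Dm
            · simp [h] at ha
            · rw [if_neg h] at ha
              exact Finset.mem_sdiff.mpr
                ⟨hsuppd' ε (Finset.mem_filter.mpr ⟨Finset.mem_univ a, ha⟩), h⟩
          have h2 : (Finset.univ.filter fun b => (if b ∈ NB R Dm then 0 else s' b) ≠ 0)
              ⊆ PS := by
            intro b hbmem
            rcases Finset.mem_filter.mp hbmem with ⟨-, hbb⟩
            by_cases h : b ∈ NB R Dm
            · simp [h] at hbb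
            · rw [if_neg h] at hbb
              exact hsupps' ε (Finset.mem_filter.mpr ⟨Finset.mem_univ b, hbb⟩)
          have e1 := Finset.card_le_card h1
          have e2 := Finset.card_le_card h2
          have e3 : (SD \ Dm).card = SD.card - Dm.card := Finset.card_sdiff_of_subset hDmsub
          have e4 : 1 ≤ Dm.card := Finset.card_pos.mpr hDmne
          omega

end FiniteSD

section CoreTransport
attribute [local instance 10] Classical.propDecidable
variable {γ A B : Type*}

theorem finite_demand_instance (Rel : B → A → Prop) (d : A → ℝ≥0∞) (s : B → ℝ≥0∞)
    (hd : ∀ a, d a ≠ ⊤) (hs : ∑' b, s b ≠ ⊤)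
    (hall : ∀ D : Finset A, ∑ a ∈ D, d a ≤ ∑' b, if ∃ a ∈ D, Rel b a then s b else 0)
    (F : Finset A) :
    ∃ f : B → A → ℝ≥0∞, (∀ b a, ¬ Rel b a → f b a = 0) ∧
      (∀ a ∈ F, ∑' b, f b a = d a) ∧ (∀ a, ∑' b, f b a ≤ d a) ∧
      (∀ b, ∑' a, f b a ≤ s b) := by
  classical
  set ty : B → Finset {a : A // a ∈ F} :=
    fun b => Finset.univ.filter (fun a => Rel b a.1) with hty
  have mem_ty : ∀ b (a : {a : A // a ∈ F}), a ∈ ty b ↔ Rel b a.1 := by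
    intro b a; simp [hty]
  set S : Finset {a : A // a ∈ F} → ℝ≥0∞ := fun T => ∑' b, if ty b = T then s b else 0 with hS
  have hST : ∀ T, (∑' b, if ty b = T then s b else 0) = S T := fun T => by rw [hS]
  have hSfin : ∀ T, S T ≠ ⊤ := by
    intro T
    rw [← hST]
    refine ne_top_of_le_ne_top hs (ENNReal.tsum_le_tsum (fun b => ?_))
    split_ifs <;> simp
  set d' : {a : A // a ∈ F} → ℝ≥0 := fun a => (d a.1).toNNReal with hd'
  set s' : Finset {a : A // a ∈ F} → ℝ≥0 := fun T => (S T).toNNReal with hs'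
  have coed : ∀ a : {a : A // a ∈ F}, (d' a : ℝ≥0∞) = d a.1 :=
    fun a => ENNReal.coe_toNNReal (hd a.1)
  have coeS : ∀ T, (s' T : ℝ≥0∞) = S T := fun T => ENNReal.coe_toNNReal (hSfin T)
  -- aggregated Hall condition
  have hall' : ∀ D : Finset {a : A // a ∈ F},
      ∑ a ∈ D, d' a ≤ ∑ T ∈ NB (fun T a => a ∈ T) D, s' T := by
    intro D
    rw [← ENNReal.coe_le_coe, ENNReal.coe_finset_sum, ENNReal.coe_finset_sum]
    have hL : ∑ a ∈ D, (d' a : ℝ≥0∞) = ∑ a ∈ D.image Subtype.val, d a := by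
      rw [Finset.sum_image (fun x _ y _ h => Subtype.ext h)]
      exact Finset.sum_congr rfl (fun a _ => coed a)
    have hR : ∑ T ∈ NB (fun T a => a ∈ T) D, (s' T : ℝ≥0∞)
        = ∑' b, if ∃ a ∈ D.image Subtype.val, Rel b a then s b else 0 := by
      calc ∑ T ∈ NB (fun T a => a ∈ T) D, (s' T : ℝ≥0∞)
          = ∑ T ∈ NB (fun T a => a ∈ T) D, ∑' b, (if ty b = T then s b else 0) := by
            refine Finset.sum_congr rfl (fun T _ => ?_)
            rw [coeS, hST]
        _ = ∑' b, ∑ T ∈ NB (fun T a => a ∈ T) D, (if ty b = T then s b else 0) :=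
            (Summable.tsum_finsetSum (fun i _ => ENNReal.summable)).symm
        _ = ∑' b, if ∃ a ∈ D.image Subtype.val, Rel b a then s b else 0 := by
            refine tsum_congr (fun b => ?_)
            rw [Finset.sum_ite_eq (NB (fun T a => a ∈ T) D) (ty b) (fun _ => s b)]
            congr 1
            refine propext ?_
            rw [mem_NB]
            constructor
            · rintro ⟨a, haD, haT⟩
              exact ⟨a.1, Finset.mem_image_of_mem _ haD, (mem_ty b a).mp haT⟩
            · rintro ⟨a, haD, hRel⟩
              rcases Finset.mem_image.mp haD with ⟨a', ha'D, rfl⟩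
              exact ⟨a', ha'D, (mem_ty b a').mpr hRel⟩
    rw [hL, hR]
    exact hall (D.image Subtype.val)
  obtain ⟨g, hgsupp, hgcol, hgrow⟩ := finite_sd (fun T a => a ∈ T) d' s' hall'
  have hgle : ∀ T a, g T a ≤ s' T :=
    fun T a => le_trans (Finset.single_le_sum (fun i _ => zero_le) (mem_univ a)) (hgrow T)
  have hgzero : ∀ T a, S T = 0 → g T a = 0 := by
    intro T a h0
    have := hgle T a
    rw [hs'] at this
    simp only [h0, ENNReal.toNNReal_zero, le_zero_iff] at this
    exact this
  have hcolF : ∀ (a : A), a ∈ F → ∑' b,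
      (if h : a ∈ F then (g (ty b) ⟨a, h⟩ : ℝ≥0∞) * (s b / S (ty b)) else 0) = d a := by
    intro a ha
    show ∑' b, (if h : a ∈ F then (g (ty b) ⟨a, h⟩ : ℝ≥0∞) * (s b / S (ty b)) else 0) = d a
    have key : ∀ b : B, (if h : a ∈ F then (g (ty b) ⟨a, h⟩ : ℝ≥0∞) * (s b / S (ty b)) else 0)
        = ∑ T : Finset {a : A // a ∈ F},
            (if ty b = T then ((g T ⟨a, ha⟩ : ℝ≥0∞) / S T) * (if ty b = T then s b else 0) else 0) := by
      intro b
      rw [Finset.sum_ite_eq Finset.univ (ty b)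
        (fun T => ((g T ⟨a, ha⟩ : ℝ≥0∞) / S T) * (if ty b = T then s b else 0))]
      rw [if_pos (Finset.mem_univ _), if_pos rfl, dif_pos ha]
      rw [div_eq_mul_inv, div_eq_mul_inv]; ring
    calc ∑' b, (if h : a ∈ F then (g (ty b) ⟨a, h⟩ : ℝ≥0∞) * (s b / S (ty b)) else 0)
        = ∑' b, ∑ T : Finset {a : A // a ∈ F},
            (if ty b = T then ((g T ⟨a, ha⟩ : ℝ≥0∞) / S T) * (if ty b = T then s b else 0) else 0) :=
          tsum_congr key
      _ = ∑ T : Finset {a : A // a ∈ F}, ∑' b,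
            (if ty b = T then ((g T ⟨a, ha⟩ : ℝ≥0∞) / S T) * (if ty b = T then s b else 0) else 0) :=
          Summable.tsum_finsetSum (fun i _ => ENNReal.summable)
      _ = ∑ T : Finset {a : A // a ∈ F}, ((g T ⟨a, ha⟩ : ℝ≥0∞) / S T) * S T := by
          refine Finset.sum_congr rfl (fun T _ => ?_)
          have h1 : ∀ b : B, (if ty b = T then ((g T ⟨a, ha⟩ : ℝ≥0∞) / S T) * (if ty b = T then s b else 0) else 0)
              = ((g T ⟨a, ha⟩ : ℝ≥0∞) / S T) * (if ty b = T then s b else 0) := by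
            intro b
            by_cases h : ty b = T
            · rw [if_pos h]
            · rw [if_neg h, if_neg h, mul_zero]
          rw [tsum_congr h1, ENNReal.tsum_mul_left, hST]
      _ = ∑ T : Finset {a : A // a ∈ F}, (g T ⟨a, ha⟩ : ℝ≥0∞) := by
          refine Finset.sum_congr rfl (fun T _ => ?_)
          by_cases h0 : S T = 0
          · rw [hgzero T _ h0, h0]; simp
          · exact ENNReal.div_mul_cancel h0 (hSfin T)
      _ = d a := by
          rw [← ENNReal.coe_finset_sum, hgcol ⟨a, ha⟩, coed]
  refine ⟨fun b a => if h : a ∈ F then (g (ty b) ⟨a, h⟩ : ℝ≥0∞) * (s b / S (ty b)) else 0,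
    ?_, ?_, ?_, ?_⟩
  · -- support
    intro b a hRel
    show (if h : a ∈ F then (g (ty b) ⟨a, h⟩ : ℝ≥0∞) * (s b / S (ty b)) else 0) = 0
    by_cases h : a ∈ F
    · rw [dif_pos h]
      have : g (ty b) ⟨a, h⟩ = 0 := hgsupp _ _ (fun hmem => hRel ((mem_ty b ⟨a, h⟩).mp hmem))
      rw [this]; simp
    · rw [dif_neg h]
  · -- columns on F
    exact hcolF
  · -- column bound everywhere
    intro a
    by_cases h : a ∈ F
    · exact le_of_eq (hcolF a h)
    · have hz : ∀ b : B, (if h : a ∈ F then (g (ty b) ⟨a, h⟩ : ℝ≥0∞) * (s b / S (ty b)) else 0) = 0 :=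
        fun b => dif_neg h
      show ∑' b, (if h : a ∈ F then (g (ty b) ⟨a, h⟩ : ℝ≥0∞) * (s b / S (ty b)) else 0) ≤ d a
      rw [tsum_congr hz]; simp
  · -- rows
    intro b
    show ∑' a, (if h : a ∈ F then (g (ty b) ⟨a, h⟩ : ℝ≥0∞) * (s b / S (ty b)) else 0) ≤ s b
    have hzero : ∀ a ∉ F, (if h : a ∈ F then (g (ty b) ⟨a, h⟩ : ℝ≥0∞) * (s b / S (ty b)) else 0) = 0 :=
      fun a ha => dif_neg ha
    rw [tsum_eq_sum hzero]
    have hattach : ∑ a ∈ F, (if h : a ∈ F then (g (ty b) ⟨a, h⟩ : ℝ≥0∞) * (s b / S (ty b)) else 0)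
        = ∑ a' : {a : A // a ∈ F}, (g (ty b) a' : ℝ≥0∞) * (s b / S (ty b)) := by
      rw [Finset.univ_eq_attach, ← Finset.sum_attach F
        (fun a => if h : a ∈ F then (g (ty b) ⟨a, h⟩ : ℝ≥0∞) * (s b / S (ty b)) else 0)]
      refine Finset.sum_congr rfl (fun a' _ => ?_)
      rw [dif_pos a'.2]
    rw [hattach, ← Finset.sum_mul]
    calc (∑ a' : {a : A // a ∈ F}, (g (ty b) a' : ℝ≥0∞)) * (s b / S (ty b))
        ≤ (s' (ty b) : ℝ≥0∞) * (s b / S (ty b)) := by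
          refine mul_le_mul_left ?_ _
          rw [← ENNReal.coe_finset_sum, ENNReal.coe_le_coe]
          exact hgrow (ty b)
      _ ≤ s b := by
          rw [coeS]
          by_cases h0 : S (ty b) = 0
          · rw [h0]; simp
          · rw [mul_comm, ENNReal.div_mul_cancel h0 (hSfin (ty b))]


lemma tsum_split (h : B → ℝ≥0∞) (G : Finset B) :
    ∑' b, h b = ∑ b ∈ G, h b + ∑' b : {x : B // x ∉ G}, h b.1 := by
  classical
  have h1 : ∀ b, h b = (if b ∈ G then h b else 0) + (if b ∈ {x : B | x ∉ G} then h b else 0) := by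
    intro b; by_cases hb : b ∈ G <;> simp [hb]
  rw [tsum_congr h1, ENNReal.tsum_add]
  congr 1
  · rw [tsum_eq_sum (s := G) (f := fun b => if b ∈ G then h b else 0) (fun b hb => if_neg hb)]
    exact Finset.sum_congr rfl (fun b hb => if_pos hb)
  · calc ∑' b, (if b ∈ {x : B | x ∉ G} then h b else 0)
        = ∑' b, Set.indicator {x : B | x ∉ G} h b :=
          tsum_congr (fun b => (Set.indicator_apply _ _ _).symm)
      _ = ∑' x : {x : B | x ∉ G}, h x := (_root_.tsum_subtype _ h).symm

theorem supply_demand (Rel : B → A → Prop) (d : A → ℝ≥0∞) (s : B → ℝ≥0∞)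
    (hd : ∀ a, d a ≠ ⊤) (hs : ∑' b, s b ≠ ⊤)
    (hall : ∀ D : Finset A, ∑ a ∈ D, d a ≤ ∑' b, if ∃ a ∈ D, Rel b a then s b else 0) :
    ∃ f : B → A → ℝ≥0∞, (∀ b a, ¬ Rel b a → f b a = 0) ∧
      (∀ a, ∑' b, f b a = d a) ∧ (∀ b, ∑' a, f b a ≤ s b) := by
  classical
  choose g hgsupp hgcolF hgcol hgrow using finite_demand_instance Rel d s hd hs hall
  have hgpt : ∀ F b a, g F b a ≤ s b :=
    fun F b a => le_trans (ENNReal.le_tsum a) (hgrow F b)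
  haveI : Nonempty (Finset A) := ⟨∅⟩
  obtain ⟨𝒰, h𝒰⟩ := Filter.exists_ultrafilter_le (atTop : Filter (Finset A))
  have hlim : ∀ b a, ∃ x : ℝ≥0∞, Filter.Tendsto (fun F => g F b a) ↑𝒰 (𝓝 x) := by
    intro b a
    obtain ⟨x, -, hx⟩ := isCompact_univ.ultrafilter_le_nhds (𝒰.map (fun F => g F b a))
      (by simp [Filter.le_principal_iff])
    exact ⟨x, hx⟩
  choose f hf using hlim
  refine ⟨f, ?_, ?_, ?_⟩
  · intro b a hR
    have hzero : ∀ F : Finset A, g F b a = 0 := fun F => hgsupp F b a hR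
    refine tendsto_nhds_unique (hf b a) ?_
    simpa [hzero] using (tendsto_const_nhds :
      Filter.Tendsto (fun _ : Finset A => (0:ℝ≥0∞)) ↑𝒰 (𝓝 0))
  · intro a
    refine le_antisymm ?_ ?_
    · rw [ENNReal.tsum_eq_iSup_sum]
      refine iSup_le (fun G => ?_)
      have htend : Filter.Tendsto (fun F => ∑ b ∈ G, g F b a) ↑𝒰 (𝓝 (∑ b ∈ G, f b a)) :=
        tendsto_finset_sum G (fun b _ => hf b a)
      refine le_of_tendsto htend (Filter.Eventually.of_forall (fun F => ?_))
      exact le_trans (ENNReal.sum_le_tsum G) (hgcol F a)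
    · have key : ∀ G : Finset B, d a ≤ ∑ b ∈ G, f b a + ∑' b : {x : B // x ∉ G}, s b.1 := by
        intro G
        have hmem : {F : Finset A | a ∈ F} ∈ 𝒰 := by
          refine h𝒰 (Filter.mem_of_superset (Filter.mem_atTop {a}) ?_)
          intro F hF
          exact hF (Finset.mem_singleton_self a)
        have hev : ∀ᶠ F in (𝒰 : Filter (Finset A)),
            d a ≤ ∑ b ∈ G, g F b a + ∑' b : {x : B // x ∉ G}, s b.1 := by
          refine Filter.eventually_iff.mpr (Filter.mem_of_superset hmem ?_)
          intro F hF
          have h1 : d a = ∑' b, g F b a := (hgcolF F a hF).symm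
          have h2 := tsum_split (fun b => g F b a) G
          have h3 : ∑' b : {x : B // x ∉ G}, g F b.1 a ≤ ∑' b : {x : B // x ∉ G}, s b.1 :=
            ENNReal.tsum_le_tsum (fun b => hgpt F b.1 a)
          calc d a = ∑ b ∈ G, g F b a + ∑' b : {x : B // x ∉ G}, g F b.1 a := by rw [h1, h2]
            _ ≤ ∑ b ∈ G, g F b a + ∑' b : {x : B // x ∉ G}, s b.1 := add_le_add_right h3 _
        have htend : Filter.Tendsto
            (fun F => ∑ b ∈ G, g F b a + ∑' b : {x : B // x ∉ G}, s b.1) ↑𝒰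
            (𝓝 (∑ b ∈ G, f b a + ∑' b : {x : B // x ∉ G}, s b.1)) :=
          (tendsto_finset_sum G (fun b _ => hf b a)).add tendsto_const_nhds
        exact ge_of_tendsto htend hev
      have htail := ENNReal.tendsto_tsum_compl_atTop_zero (f := s) hs
      have hsum : Filter.Tendsto (fun G : Finset B => ∑ b ∈ G, f b a) atTop
          (𝓝 (∑' b, f b a)) := (ENNReal.summable (f := fun b => f b a)).hasSum
      have htend2 : Filter.Tendsto
          (fun G : Finset B => ∑ b ∈ G, f b a + ∑' b : {x : B // x ∉ G}, s b.1) atTop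
          (𝓝 (∑' b, f b a + 0)) := hsum.add htail
      simpa using ge_of_tendsto htend2 (Filter.Eventually.of_forall key)
  · intro b
    rw [ENNReal.tsum_eq_iSup_sum]
    refine iSup_le (fun G => ?_)
    have htend : Filter.Tendsto (fun F => ∑ a ∈ G, g F b a) ↑𝒰 (𝓝 (∑ a ∈ G, f b a)) :=
      tendsto_finset_sum G (fun a _ => hf b a)
    refine le_of_tendsto htend (Filter.Eventually.of_forall (fun F => ?_))
    exact le_trans (ENNReal.sum_le_tsum G) (hgrow F b)


lemma tsum_T_eq {X Y : Set γ} (hXY : X ⊆ Y) (g : γ → ℝ≥0∞)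
    (hg : ∀ c, c ∉ X → g c = 0) : ∑' y : Y, g y.1 = ∑' x : X, g x.1 := by
  rw [_root_.tsum_subtype X (fun c => g c), _root_.tsum_subtype Y (fun c => g c)]
  refine tsum_congr (fun c => ?_)
  rw [Set.indicator_apply, Set.indicator_apply]
  by_cases h1 : c ∈ X
  · rw [if_pos h1, if_pos (hXY h1)]
  · rw [if_neg h1]
    by_cases h2 : c ∈ Y
    · rw [if_pos h2, hg c h1]
    · rw [if_neg h2]

lemma tsum_ite_subtype (X : Set γ) (P : γ → Prop) (g : γ → ℝ≥0∞)
    [∀ c, Decidable (c ∈ X ∧ P c)] [∀ c, Decidable (P c)] :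
    ∑' c, (if c ∈ X ∧ P c then g c else 0) = ∑' b : X, (if P b.1 then g b.1 else 0) := by
  rw [_root_.tsum_subtype X (fun c => if P c then g c else 0)]
  refine tsum_congr (fun c => ?_)
  rw [Set.indicator_apply]
  by_cases h1 : c ∈ X <;> by_cases h2 : P c <;> simp [h1, h2]

lemma tsum_set_eq_ite {U : Set γ} {Q : γ → Prop} [∀ c, Decidable (Q c)]
    (hU : ∀ c, c ∈ U ↔ Q c) (g : γ → ℝ≥0∞) :
    ∑' b : U, g b.1 = ∑' c, (if Q c then g c else 0) := by
  rw [_root_.tsum_subtype U (fun c => g c)]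
  refine tsum_congr (fun c => ?_)
  rw [Set.indicator_apply]
  by_cases h : c ∈ U
  · rw [if_pos h, if_pos ((hU c).mp h)]
  · rw [if_neg h, if_neg (fun hq => h ((hU c).mpr hq))]


end CoreTransport

section ArrowChars
attribute [local instance 10] Classical.propDecidable

/-- structural characterisation of `upArrow` of a subset of `R1`. -/
lemma upArrow_char (W : Set ℤ) (nbr : S → S → Prop) (x : S) (η ξ : S → ℤ)
    (D1 : Set (S → ℤ)) (hD1 : D1 ⊆ R1 W nbr x η ξ) (b : S → ℤ) :
    b ∈ upArrow W nbr x η ξ D1 ↔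
      (b ∈ S2 W nbr x ξ ∧ ∃ a ∈ D1, app η a ≤ app ξ b) := by
  constructor
  · rintro ⟨hCS, hApp, a₀, ha₀, hord⟩
    have haR1 := hD1 ha₀
    refine ⟨⟨hCS, hApp, ?_⟩, a₀, ha₀, hord⟩
    exact lt_of_lt_of_le haR1.2.2 (hord x)
  · rintro ⟨⟨hCS, hApp, -⟩, a₀, ha₀, hord⟩
    exact ⟨hCS, hApp, a₀, ha₀, hord⟩

lemma downArrow_char (W : Set ℤ) (nbr : S → S → Prop) (x : S) (η ξ : S → ℤ)
    (D2 : Set (S → ℤ)) (hD2 : D2 ⊆ R2 W nbr x η ξ) (a : S → ℤ) :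
    a ∈ downArrow W nbr x η ξ D2 ↔
      (a ∈ S1 W nbr x η ∧ ∃ b ∈ D2, app η a ≤ app ξ b) := by
  constructor
  · rintro ⟨hCS, hApp, b₀, hb₀, hord⟩
    have hbR2 := hD2 hb₀
    refine ⟨⟨hCS, hApp, ?_⟩, b₀, hb₀, hord⟩
    exact lt_of_le_of_lt (hord x) hbR2.2.2
  · rintro ⟨⟨hCS, hApp, -⟩, b₀, hb₀, hord⟩
    exact ⟨hCS, hApp, b₀, hb₀, hord⟩


end ArrowChars

section MainProof
attribute [local instance 10] Classical.propDecidable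

/-- if conditions (C1) and (C2) hold for the fixed pair `η ≤ ξ` and the
site `x`, then the flow problem `P^x` is feasible: there exists a solution `f`. -/
theorem feasibility_of_Px
    {S : Type*} [Countable S] [DecidableEq S]
    (nbr : S → S → Prop) (hsym : ∀ x y, nbr x y → nbr y x) (hirr : ∀ x, ¬ nbr x x)
    (W : Set ℤ) (hW : ∀ w ∈ W, 0 ≤ w)
    (η ξ : S → ℤ) (hηΩ : ∀ z, η z ∈ W) (hξΩ : ∀ z, ξ z ∈ W) (hle : η ≤ ξ)
    (x : S) (c1 c2 : (S → ℤ) → ℝ≥0∞)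
    (hc1 : ∀ a, c1 a ≠ 0 → a ∈ ChangeSet nbr x ∧ Applicable W η a)
    (hc2 : ∀ b, c2 b ≠ 0 → b ∈ ChangeSet nbr x ∧ Applicable W ξ b)
    (hfin : ∑' a : ChangeSet nbr x, (c1 a.1 + c2 a.1) ≠ ⊤)
    (hC1 : CondC1 W nbr x η ξ c1 c2) (hC2 : CondC2 W nbr x η ξ c1 c2) :
    ∃ f : (S → ℤ) → (S → ℤ) → ℝ≥0∞, (∀ b a, f b a ≠ ⊤) ∧
      IsSolution W nbr x η ξ c1 c2 f := by
  classical
  set R1s := R1 W nbr x η ξ with hR1s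
  set S1s := S1 W nbr x η with hS1s
  set R2s := R2 W nbr x η ξ with hR2s
  set S2s := S2 W nbr x ξ with hS2s
  -- finiteness of individual rates
  have hfin1 : ∀ c : S → ℤ, c ∈ ChangeSet nbr x → c1 c ≠ ⊤ := by
    intro c hc
    have h1 : c1 c + c2 c ≤ ∑' a : ChangeSet nbr x, (c1 a.1 + c2 a.1) :=
      ENNReal.le_tsum (⟨c, hc⟩ : ChangeSet nbr x)
    exact ne_top_of_le_ne_top hfin (le_trans le_self_add h1)
  have hfin2 : ∀ c : S → ℤ, c ∈ ChangeSet nbr x → c2 c ≠ ⊤ := by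
    intro c hc
    have h1 : c1 c + c2 c ≤ ∑' a : ChangeSet nbr x, (c1 a.1 + c2 a.1) :=
      ENNReal.le_tsum (⟨c, hc⟩ : ChangeSet nbr x)
    exact ne_top_of_le_ne_top hfin (le_trans le_add_self h1)
  have hfinsum1 : ∑' a : S1s, c1 a.1 ≠ ⊤ := by
    refine ne_top_of_le_ne_top hfin ?_
    refine ENNReal.summable.tsum_le_tsum_of_inj (fun a : S1s => (⟨a.1, a.2.1⟩ : ChangeSet nbr x))
      (fun u v huv => by simpa [Subtype.ext_iff] using huv)
      (fun c _ => zero_le) (fun a => le_self_add) ENNReal.summable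
  have hfinsum2 : ∑' b : S2s, c2 b.1 ≠ ⊤ := by
    refine ne_top_of_le_ne_top hfin ?_
    refine ENNReal.summable.tsum_le_tsum_of_inj (fun b : S2s => (⟨b.1, b.2.1⟩ : ChangeSet nbr x))
      (fun u v huv => by simpa [Subtype.ext_iff] using huv)
      (fun c _ => zero_le) (fun b => le_add_self) ENNReal.summable
  -- disjointness
  have dR1S1 : ∀ a, a ∈ R1s → a ∉ S1s := by
    intro a h1 h2
    exact absurd (lt_trans h2.2.2 (lt_of_le_of_lt (hle x) h1.2.2)) (lt_irrefl _)
  have dS1R1 : ∀ a, a ∈ S1s → a ∉ R1s := fun a h1 h2 => dR1S1 a h2 h1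
  have dR2S2 : ∀ b, b ∈ R2s → b ∉ S2s := by
    intro b h1 h2
    exact absurd (lt_trans h2.2.2 (lt_of_lt_of_le h1.2.2 (hle x))) (lt_irrefl _)
  have dS2R2 : ∀ b, b ∈ S2s → b ∉ R2s := fun b h1 h2 => dR2S2 b h2 h1
  -- Problem (+): demands c1 on R1, supplies c2 on S2
  have hallP : ∀ D : Finset R1s, ∑ a ∈ D, c1 a.1
      ≤ ∑' b : S2s, (if ∃ a ∈ D, app η a.1 ≤ app ξ b.1 then c2 b.1 else 0) := by
    intro D
    set D1 : Set (S → ℤ) := Subtype.val '' (↑D : Set R1s) with hD1def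
    have hD1 : D1 ⊆ R1s := by rintro _ ⟨a, -, rfl⟩; exact a.2
    have h := hC1 D1 hD1
    have hL : ∑' a : D1, c1 a.1 = ∑ a ∈ D, c1 a.1 := by
      rw [hD1def, ← Finset.coe_image, Finset.tsum_subtype']
      exact Finset.sum_image (fun u _ v _ huv => Subtype.ext huv)
    have hU : ∀ c, c ∈ upArrow W nbr x η ξ D1 ↔
        (c ∈ S2s ∧ ∃ a ∈ D, app η a.1 ≤ app ξ c) := by
      intro c
      rw [upArrow_char W nbr x η ξ D1 hD1 c]
      constructor
      · rintro ⟨hS2, a₀, ⟨a, haD, rfl⟩, hord⟩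
        exact ⟨hS2, a, haD, hord⟩
      · rintro ⟨hS2, a, haD, hord⟩
        exact ⟨hS2, a.1, ⟨a, haD, rfl⟩, hord⟩
    have hR : ∑' b : upArrow W nbr x η ξ D1, c2 b.1
        = ∑' b : S2s, (if ∃ a ∈ D, app η a.1 ≤ app ξ b.1 then c2 b.1 else 0) := by
      rw [tsum_set_eq_ite hU c2,
        tsum_ite_subtype S2s (fun c => ∃ a ∈ D, app η a.1 ≤ app ξ c) c2]
    rw [hL, hR] at h
    exact h
  obtain ⟨fP, hfPsupp, hfPcol, hfProw⟩ := supply_demand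
    (fun (b : S2s) (a : R1s) => app η a.1 ≤ app ξ b.1) (fun a => c1 a.1) (fun b => c2 b.1)
    (fun a => hfin1 a.1 a.2.1) hfinsum2 hallP
  -- Problem (-): demands c2 on R2, supplies c1 on S1
  have hallM : ∀ D : Finset R2s, ∑ a ∈ D, c2 a.1
      ≤ ∑' b : S1s, (if ∃ a ∈ D, app η b.1 ≤ app ξ a.1 then c1 b.1 else 0) := by
    intro D
    set D2 : Set (S → ℤ) := Subtype.val '' (↑D : Set R2s) with hD2def
    have hD2 : D2 ⊆ R2s := by rintro _ ⟨a, -, rfl⟩; exact a.2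
    have h := hC2 D2 hD2
    have hL : ∑' a : D2, c2 a.1 = ∑ a ∈ D, c2 a.1 := by
      rw [hD2def, ← Finset.coe_image, Finset.tsum_subtype']
      exact Finset.sum_image (fun u _ v _ huv => Subtype.ext huv)
    have hU : ∀ c, c ∈ downArrow W nbr x η ξ D2 ↔
        (c ∈ S1s ∧ ∃ a ∈ D, app η c ≤ app ξ a.1) := by
      intro c
      rw [downArrow_char W nbr x η ξ D2 hD2 c]
      constructor
      · rintro ⟨hS1, b₀, ⟨b, hbD, rfl⟩, hord⟩
        exact ⟨hS1, b, hbD, hord⟩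
      · rintro ⟨hS1, b, hbD, hord⟩
        exact ⟨hS1, b.1, ⟨b, hbD, rfl⟩, hord⟩
    have hR : ∑' a : downArrow W nbr x η ξ D2, c1 a.1
        = ∑' b : S1s, (if ∃ a ∈ D, app η b.1 ≤ app ξ a.1 then c1 b.1 else 0) := by
      rw [tsum_set_eq_ite hU c1,
        tsum_ite_subtype S1s (fun c => ∃ a ∈ D, app η c ≤ app ξ a.1) c1]
    rw [hL, hR] at h
    exact h
  obtain ⟨fM, hfMsupp, hfMcol, hfMrow⟩ := supply_demand
    (fun (b : S1s) (a : R2s) => app η b.1 ≤ app ξ a.1) (fun a => c2 a.1) (fun b => c1 b.1)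
    (fun a => hfin2 a.1 a.2.1) hfinsum1 hallM
  -- assemble
  set F1 : (S → ℤ) → (S → ℤ) → ℝ≥0∞ :=
    fun b a => if h : b ∈ S2s ∧ a ∈ R1s then fP ⟨b, h.1⟩ ⟨a, h.2⟩ else 0 with hF1
  set F2 : (S → ℤ) → (S → ℤ) → ℝ≥0∞ :=
    fun b a => if h : b ∈ R2s ∧ a ∈ S1s then fM ⟨a, h.2⟩ ⟨b, h.1⟩ else 0 with hF2
  have hF1bound : ∀ b a, F1 b a ≠ ⊤ := by
    intro b a
    simp only [hF1]
    by_cases h : b ∈ S2s ∧ a ∈ R1s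
    · rw [dif_pos h]
      refine ne_top_of_le_ne_top (hfin1 a h.2.1) ?_
      rw [← hfPcol ⟨a, h.2⟩]
      exact ENNReal.le_tsum _
    · rw [dif_neg h]; exact ENNReal.zero_ne_top
  have hF2bound : ∀ b a, F2 b a ≠ ⊤ := by
    intro b a
    simp only [hF2]
    by_cases h : b ∈ R2s ∧ a ∈ S1s
    · rw [dif_pos h]
      refine ne_top_of_le_ne_top (hfin2 b h.1.1) ?_
      rw [← hfMcol ⟨b, h.1⟩]
      exact ENNReal.le_tsum _
    · rw [dif_neg h]; exact ENNReal.zero_ne_top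
  refine ⟨fun b a => F1 b a + F2 b a, ?_, ?_, ?_, ?_, ?_, ?_, ?_⟩
  · intro b a
    exact ENNReal.add_ne_top.mpr ⟨hF1bound b a, hF2bound b a⟩
  · -- domain
    intro b a hne
    have : F1 b a ≠ 0 ∨ F2 b a ≠ 0 := by
      by_contra h
      push_neg at h
      exact hne (by rw [h.1, h.2, add_zero])
    rcases this with h | h
    · simp only [hF1] at h
      by_cases hc : b ∈ S2s ∧ a ∈ R1s
      · exact ⟨Or.inl hc.1, Or.inr hc.2⟩
      · rw [dif_neg hc] at h; exact absurd rfl h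
    · simp only [hF2] at h
      by_cases hc : b ∈ R2s ∧ a ∈ S1s
      · exact ⟨Or.inr hc.1, Or.inl hc.2⟩
      · rw [dif_neg hc] at h; exact absurd rfl h
  · -- order
    intro b a hne
    have : F1 b a ≠ 0 ∨ F2 b a ≠ 0 := by
      by_contra h
      push_neg at h
      exact hne (by rw [h.1, h.2, add_zero])
    rcases this with h | h
    · simp only [hF1] at h
      by_cases hc : b ∈ S2s ∧ a ∈ R1s
      · rw [dif_pos hc] at h
        by_contra hord
        exact h (hfPsupp _ _ hord)
      · rw [dif_neg hc] at h; exact absurd rfl h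
    · simp only [hF2] at h
      by_cases hc : b ∈ R2s ∧ a ∈ S1s
      · rw [dif_pos hc] at h
        by_contra hord
        exact h (hfMsupp _ _ hord)
      · rw [dif_neg hc] at h; exact absurd rfl h
  · -- eq_R1
    intro a ha
    have hanS1 : a ∉ S1s := dR1S1 a ha
    have hz2 : ∀ c : S → ℤ, F2 c a = 0 := by
      intro c
      simp only [hF2]
      exact dif_neg (fun h => hanS1 h.2)
    have hsplit : ∑' b : T2 W nbr x η ξ, (F1 b.1 a + F2 b.1 a)
        = ∑' b : T2 W nbr x η ξ, F1 b.1 a + ∑' b : T2 W nbr x η ξ, F2 b.1 a :=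
      ENNReal.tsum_add
    have hzero2 : ∑' b : T2 W nbr x η ξ, F2 b.1 a = 0 := by
      have hz : ∀ b : T2 W nbr x η ξ, F2 b.1 a = 0 := fun b => hz2 b.1
      rw [tsum_congr hz]; exact tsum_zero
    have h1 : ∑' b : T2 W nbr x η ξ, F1 b.1 a = ∑' b : S2s, F1 b.1 a := by
      refine tsum_T_eq ?_ (fun c => F1 c a) ?_
      · exact Set.subset_union_left
      · intro c hc
        simp only [hF1]
        exact dif_neg (fun h => hc h.1)
    have h2 : ∑' b : S2s, F1 b.1 a = ∑' b : S2s, fP b ⟨a, ha⟩ := by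
      refine tsum_congr (fun b => ?_)
      simp only [hF1]; rw [dif_pos ⟨b.2, ha⟩]
    calc ∑' b : T2 W nbr x η ξ, (F1 b.1 a + F2 b.1 a)
        = ∑' b : T2 W nbr x η ξ, F1 b.1 a + ∑' b : T2 W nbr x η ξ, F2 b.1 a := hsplit
      _ = ∑' b : S2s, fP b ⟨a, ha⟩ + 0 := by rw [hzero2, h1, h2]
      _ = c1 a := by rw [add_zero]; exact hfPcol ⟨a, ha⟩
  · -- le_S1
    intro a ha
    have hanR1 : a ∉ R1s := dS1R1 a ha
    have hz1 : ∀ c : S → ℤ, F1 c a = 0 := by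
      intro c
      simp only [hF1]
      exact dif_neg (fun h => hanR1 h.2)
    have hzero1 : ∑' b : T2 W nbr x η ξ, F1 b.1 a = 0 := by
      have hz : ∀ b : T2 W nbr x η ξ, F1 b.1 a = 0 := fun b => hz1 b.1
      rw [tsum_congr hz]; exact tsum_zero
    have h1 : ∑' b : T2 W nbr x η ξ, F2 b.1 a = ∑' b : R2s, F2 b.1 a := by
      refine tsum_T_eq ?_ (fun c => F2 c a) ?_
      · exact Set.subset_union_right
      · intro c hc
        simp only [hF2]
        exact dif_neg (fun h => hc h.1)
    have h2 : ∑' b : R2s, F2 b.1 a = ∑' b : R2s, fM ⟨a, ha⟩ b := by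
      refine tsum_congr (fun b => ?_)
      simp only [hF2]; rw [dif_pos ⟨b.2, ha⟩]
    calc ∑' b : T2 W nbr x η ξ, (F1 b.1 a + F2 b.1 a)
        = ∑' b : T2 W nbr x η ξ, F1 b.1 a + ∑' b : T2 W nbr x η ξ, F2 b.1 a :=
          ENNReal.tsum_add
      _ = 0 + ∑' b : R2s, fM ⟨a, ha⟩ b := by rw [hzero1, h1, h2]
      _ ≤ c1 a := by rw [zero_add]; exact hfMrow ⟨a, ha⟩
  · -- eq_R2
    intro b hb
    have hbnS2 : b ∉ S2s := dR2S2 b hb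
    have hz1 : ∀ c : S → ℤ, F1 b c = 0 := by
      intro c
      simp only [hF1]
      exact dif_neg (fun h => hbnS2 h.1)
    have hzero1 : ∑' a : T1 W nbr x η ξ, F1 b a.1 = 0 := by
      have hz : ∀ a : T1 W nbr x η ξ, F1 b a.1 = 0 := fun a => hz1 a.1
      rw [tsum_congr hz]; exact tsum_zero
    have h1 : ∑' a : T1 W nbr x η ξ, F2 b a.1 = ∑' a : S1s, F2 b a.1 := by
      refine tsum_T_eq ?_ (fun c => F2 b c) ?_
      · exact Set.subset_union_left
      · intro c hc
        simp only [hF2]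
        exact dif_neg (fun h => hc h.2)
    have h2 : ∑' a : S1s, F2 b a.1 = ∑' a : S1s, fM a ⟨b, hb⟩ := by
      refine tsum_congr (fun a => ?_)
      simp only [hF2]; rw [dif_pos ⟨hb, a.2⟩]
    calc ∑' a : T1 W nbr x η ξ, (F1 b a.1 + F2 b a.1)
        = ∑' a : T1 W nbr x η ξ, F1 b a.1 + ∑' a : T1 W nbr x η ξ, F2 b a.1 :=
          ENNReal.tsum_add
      _ = 0 + ∑' a : S1s, fM a ⟨b, hb⟩ := by rw [hzero1, h1, h2]
      _ = c2 b := by rw [zero_add]; exact hfMcol ⟨b, hb⟩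
  · -- le_S2
    intro b hb
    have hbnR2 : b ∉ R2s := dS2R2 b hb
    have hz2 : ∀ c : S → ℤ, F2 b c = 0 := by
      intro c
      simp only [hF2]
      exact dif_neg (fun h => hbnR2 h.1)
    have hzero2 : ∑' a : T1 W nbr x η ξ, F2 b a.1 = 0 := by
      have hz : ∀ a : T1 W nbr x η ξ, F2 b a.1 = 0 := fun a => hz2 a.1
      rw [tsum_congr hz]; exact tsum_zero
    have h1 : ∑' a : T1 W nbr x η ξ, F1 b a.1 = ∑' a : R1s, F1 b a.1 := by
      refine tsum_T_eq ?_ (fun c => F1 b c) ?_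
      · exact Set.subset_union_right
      · intro c hc
        simp only [hF1]
        exact dif_neg (fun h => hc h.2)
    have h2 : ∑' a : R1s, F1 b a.1 = ∑' a : R1s, fP ⟨b, hb⟩ a := by
      refine tsum_congr (fun a => ?_)
      simp only [hF1]; rw [dif_pos ⟨hb, a.2⟩]
    calc ∑' a : T1 W nbr x η ξ, (F1 b a.1 + F2 b a.1)
        = ∑' a : T1 W nbr x η ξ, F1 b a.1 + ∑' a : T1 W nbr x η ξ, F2 b a.1 :=
          ENNReal.tsum_add
      _ = ∑' a : R1s, fP ⟨b, hb⟩ a + 0 := by rw [hzero2, h1, h2]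
      _ ≤ c2 b := by rw [add_zero]; exact hfProw ⟨b, hb⟩

end MainProof

end IPS
end

section
/- Every solution f to the flow problem P^x satisfies f(b,a) = 0 for every b ∈ R_2^x ∪ B_2^{+x•} and every a ∈ B_1^{+x}. -/
open scoped ENNReal

namespace IPS

variable {S : Type*} [DecidableEq S]

/-- every solution `f` to `P^x` satisfies `f(b,a) = 0` for `b ∈ R_2^x ∪ B_2^{+x•}` and `a ∈ B_1^{+x}`. -/
theorem zero_flow_1
    {S : Type*} [Countable S] [DecidableEq S]
    (nbr : S → S → Prop) (hsym : ∀ x y, nbr x y → nbr y x) (hirr : ∀ x, ¬ nbr x x)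
    (W : Set ℤ) (hW : ∀ w ∈ W, 0 ≤ w)
    (η ξ : S → ℤ) (hηΩ : ∀ z, η z ∈ W) (hξΩ : ∀ z, ξ z ∈ W) (hle : η ≤ ξ)
    (x : S) (c1 c2 : (S → ℤ) → ℝ≥0∞)
    (hc1 : ∀ a, c1 a ≠ 0 → a ∈ ChangeSet nbr x ∧ Applicable W η a)
    (hc2 : ∀ b, c2 b ≠ 0 → b ∈ ChangeSet nbr x ∧ Applicable W ξ b)
    (hfin : ∑' a : ChangeSet nbr x, (c1 a.1 + c2 a.1) ≠ ⊤)
    (f : (S → ℤ) → (S → ℤ) → ℝ≥0∞) (hfT : ∀ b a, f b a ≠ ⊤)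
    (hf : IsSolution W nbr x η ξ c1 c2 f) :
    ∀ b ∈ R2 W nbr x η ξ ∪ B2 η ξ (CplusBull W nbr x ξ),
      ∀ a ∈ B1 η ξ (Cplus W nbr x η), f b a = 0 := by
  intro b hb a ha
  by_contra hne
  have horder := hf.order b a hne
  obtain ⟨haC, hnle⟩ := ha
  have hηa : η ≤ app η a := by
    intro z
    by_cases hz : z = x
    · subst hz; exact le_of_lt haC.2.2.1
    · exact le_of_eq (haC.2.2.2 z hz).symm
  cases hb with
  | inl hb => exact absurd (le_trans (hηa x) (horder x)) (not_le.mpr hb.2.2)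
  | inr hb => exact hb.2 (le_trans hηa horder)

end IPS
end

section
/- Let y, z be sites with y ~ x, z ~ x and z ≠ y. Then every solution f to the flow problem P^x satisfies f(b,a) = 0 for every b ∈ R_2^x ∪ B_2^{+xz} and every a ∈ B_1^{+xy}. -/
open scoped ENNReal

namespace IPS

variable {S : Type*} [DecidableEq S]

/-- A change that increases at `x` and decreases at `y` vanishes elsewhere. -/
lemma change_support {S : Type*} [DecidableEq S] {nbr : S → S → Prop} {x : S}
    (hirr : ∀ x, ¬ nbr x x) {a : S → ℤ} (ha : a ∈ ChangeSet nbr x) {y : S}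
    (hax : 0 < a x) (hay : a y < 0) :
    ∀ w, w ≠ x → w ≠ y → a w = 0 := by
  rcases ha with ⟨k, hk, h | h⟩ | ⟨y', hy', k, l, hk, hl, h | h⟩
  · exfalso
    have : a y = 0 := by
      subst h; rw [Pi.single_apply]
      have : y ≠ x := by rintro rfl; exact absurd hax hay.asymm
      simp [this]
    omega
  · exfalso
    have : a x = -k := by subst h; simp
    omega
  · have hyx : y' ≠ x := fun hh => hirr x (hh ▸ hy')
    have hyy : y = y' := by
      by_contra hne
      have : a y ≥ 0 := by
        subst h; simp only [Pi.add_apply, Pi.single_apply]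
        have : y ≠ y' := hne
        split_ifs with h1 <;> simp [this] <;> omega
      omega
    intro w hwx hwy
    subst h hyy
    simp only [Pi.add_apply, Pi.single_apply]
    simp [hwx, hwy]
  · exfalso
    have hyx : y' ≠ x := fun hh => hirr x (hh ▸ hy')
    have : a x = -k := by subst h; simp [Pi.single_apply, hyx]
    omega

/-- for `y ~ x`, `z ~ x`, `z ≠ y`, every solution `f` to `P^x` satisfies `f(b,a) = 0` for `b ∈ R_2^x ∪ B_2^{+xz}` and `a ∈ B_1^{+xy}`. -/
theorem zero_flow_4
    {S : Type*} [Countable S] [DecidableEq S]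
    (nbr : S → S → Prop) (hsym : ∀ x y, nbr x y → nbr y x) (hirr : ∀ x, ¬ nbr x x)
    (W : Set ℤ) (hW : ∀ w ∈ W, 0 ≤ w)
    (η ξ : S → ℤ) (hηΩ : ∀ z, η z ∈ W) (hξΩ : ∀ z, ξ z ∈ W) (hle : η ≤ ξ)
    (x : S) (c1 c2 : (S → ℤ) → ℝ≥0∞)
    (hc1 : ∀ a, c1 a ≠ 0 → a ∈ ChangeSet nbr x ∧ Applicable W η a)
    (hc2 : ∀ b, c2 b ≠ 0 → b ∈ ChangeSet nbr x ∧ Applicable W ξ b)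
    (hfin : ∑' a : ChangeSet nbr x, (c1 a.1 + c2 a.1) ≠ ⊤)
    (y z : S) (hxy : nbr x y) (hxz : nbr x z) (hzy : z ≠ y)
    (f : (S → ℤ) → (S → ℤ) → ℝ≥0∞) (hfT : ∀ b a, f b a ≠ ⊤)
    (hf : IsSolution W nbr x η ξ c1 c2 f) :
    ∀ b ∈ R2 W nbr x η ξ ∪ B2 η ξ (CplusPair W nbr x ξ z),
      ∀ a ∈ B1 η ξ (CplusPair W nbr x η y), f b a = 0 := by
  intro b hb a ha
  by_contra hne
  have horder := hf.order b a hne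
  obtain ⟨⟨haC, haApp, haxlt, haylt⟩, hanle⟩ := ha
  have hax : 0 < a x := by
    have := haxlt; simp only [app, Pi.add_apply] at this; omega
  have hay : a y < 0 := by
    have := haylt; simp only [app, Pi.add_apply] at this; omega
  have hzx : z ≠ x := fun hh => hirr x (hh ▸ hxz)
  have haz : a z = 0 := change_support hirr haC hax hay z hzx hzy
  rcases hb with hb | hb
  ·
    have h1 := horder x
    have h2 := hb.2.2
    simp only [app, Pi.add_apply] at h1 h2
    have hx' : η x ≤ ξ x := hle x
    omega
  · -- b ∈ B2 (CplusPair x ξ z)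
    obtain ⟨⟨hbC, hbApp, hbxlt, hbzlt⟩, hbnle⟩ := hb
    have hbz : ξ z + b z < η z := by
      simp only [app, Pi.add_apply] at hbzlt
      -- find coordinate where η ≰ ξ_b
      rw [Pi.le_def] at hbnle; push_neg at hbnle
      obtain ⟨w, hw⟩ := hbnle
      simp only [app, Pi.add_apply] at hw
      have hbx : 0 < b x := by
        have := hbxlt; simp only [app, Pi.add_apply] at this; omega
      have hbzneg : b z < 0 := by omega
      by_cases hwz : w = z
      · subst hwz; omega
      · exfalso
        by_cases hwx : w = x
        · rw [hwx] at hw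
          have h3 : η x ≤ ξ x := hle x; omega
        · have h4 : b w = 0 := change_support hirr hbC hbx hbzneg w hwx hwz
          have h5 : η w ≤ ξ w := hle w; omega
    have h1 := horder z
    simp only [app, Pi.add_apply] at h1
    have hz' : η z ≤ ξ z := hle z
    omega

end IPS
end

section
/- Let y, z be sites with y ~ x, z ~ x and z ≠ y. Then every solution f to the flow problem P^x satisfies f(b,a) = 0 for every b ∈ B_2^{-xy} and every a ∈ R_1^x ∪ B_1^{-xz}. -/
open scoped ENNReal

namespace IPS

variable {S : Type*} [DecidableEq S]

/-- for `y ~ x`, `z ~ x`, `z ≠ y`, every solution `f` to `P^x` satisfies `f(b,a) = 0` for `b ∈ B_2^{-xy}` and `a ∈ R_1^x ∪ B_1^{-xz}`. -/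
theorem zero_flow_5
    {S : Type*} [Countable S] [DecidableEq S]
    (nbr : S → S → Prop) (hsym : ∀ x y, nbr x y → nbr y x) (hirr : ∀ x, ¬ nbr x x)
    (W : Set ℤ) (hW : ∀ w ∈ W, 0 ≤ w)
    (η ξ : S → ℤ) (hηΩ : ∀ z, η z ∈ W) (hξΩ : ∀ z, ξ z ∈ W) (hle : η ≤ ξ)
    (x : S) (c1 c2 : (S → ℤ) → ℝ≥0∞)
    (hc1 : ∀ a, c1 a ≠ 0 → a ∈ ChangeSet nbr x ∧ Applicable W η a)
    (hc2 : ∀ b, c2 b ≠ 0 → b ∈ ChangeSet nbr x ∧ Applicable W ξ b)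
    (hfin : ∑' a : ChangeSet nbr x, (c1 a.1 + c2 a.1) ≠ ⊤)
    (y z : S) (hxy : nbr x y) (hxz : nbr x z) (hzy : z ≠ y)
    (f : (S → ℤ) → (S → ℤ) → ℝ≥0∞) (hfT : ∀ b a, f b a ≠ ⊤)
    (hf : IsSolution W nbr x η ξ c1 c2 f) :
    ∀ b ∈ B2 η ξ (CminusPair W nbr x ξ y),
      ∀ a ∈ R1 W nbr x η ξ ∪ B1 η ξ (CminusPair W nbr x η z), f b a = 0 := by
  intro b hb a ha
  by_contra hne
  have horder := hf.order b a hne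
  obtain ⟨⟨hbCS, hbApp, hbx, hby⟩, _⟩ := hb
  have hyx : y ≠ x := fun h => hirr x (h ▸ hxy)
  have hzx : z ≠ x := fun h => hirr x (h ▸ hxz)
  have hbx' : b x < 0 := by
    have := hbx; simp only [app, Pi.add_apply] at this; omega
  have hby' : 0 < b y := by
    have := hby; simp only [app, Pi.add_apply] at this; omega
  rcases ha with haR | haB
  · -- a ∈ R1 : contradiction at coordinate x
    obtain ⟨_, _, hax⟩ := haR
    have hox := horder x
    simp only [app, Pi.add_apply] at hox hax hbx
    omega
  · -- a ∈ B1 (CminusPair η z)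
    obtain ⟨⟨haCS, haApp, hax, haz⟩, hnle⟩ := haB
    have hax' : a x < 0 := by
      have := hax; simp only [app, Pi.add_apply] at this; omega
    have haz' : 0 < a z := by
      have := haz; simp only [app, Pi.add_apply] at this; omega
    -- structure of b : b z = 0
    have hbz : b z = 0 := by
      rcases hbCS with ⟨k, hk, hb1 | hb1⟩ | ⟨w, hw, k, l, hk, hl, hb1 | hb1⟩
      · exfalso; rw [hb1] at hby'; rw [Pi.single_apply, if_neg hyx] at hby'; omega
      · exfalso; rw [hb1] at hby'; rw [Pi.single_apply, if_neg hyx] at hby'; omega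
      · exfalso; rw [hb1] at hbx'
        simp only [Pi.add_apply, Pi.single_apply, if_pos rfl] at hbx'
        have hwx : w ≠ x := fun h => hirr x (h ▸ hw)
        rw [if_neg (fun h : x = w => hwx h.symm)] at hbx'; omega
      · have hwy : w = y := by
          by_contra hwy
          rw [hb1] at hby'
          simp only [Pi.add_apply, Pi.single_apply, if_neg hyx,
            if_neg (fun h : y = w => hwy h.symm)] at hby'
          omega
        rw [hb1, hwy]
        simp only [Pi.add_apply, Pi.single_apply, if_neg hzx, if_neg hzy]
        ring
    -- structure of a : violation of order is at coordinate z
    have haviol : ξ z < app η a z := by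
      rw [Pi.le_def, not_forall] at hnle
      obtain ⟨w0, hw0⟩ := hnle
      have haw0 : ξ w0 - η w0 < a w0 := by
        simp only [app, Pi.add_apply] at hw0; omega
      have haw0pos : 0 < a w0 := by
        have h : η w0 ≤ ξ w0 := hle w0
        omega
      have hw0z : w0 = z := by
        rcases haCS with ⟨k, hk, ha1 | ha1⟩ | ⟨w, hw, k, l, hk, hl, ha1 | ha1⟩
        · exfalso; rw [ha1] at hax'; rw [Pi.single_apply, if_pos rfl] at hax'; omega
        · exfalso; rw [ha1] at haz'; rw [Pi.single_apply, if_neg hzx] at haz'; omega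
        · exfalso; rw [ha1] at hax'
          simp only [Pi.add_apply, Pi.single_apply, if_pos rfl] at hax'
          have hwx : w ≠ x := fun h => hirr x (h ▸ hw)
          rw [if_neg (fun h : x = w => hwx h.symm)] at hax'; omega
        · have hwz : w = z := by
            by_contra hwz
            rw [ha1] at haz'
            simp only [Pi.add_apply, Pi.single_apply, if_neg hzx,
              if_neg (fun h : z = w => hwz h.symm)] at haz'
            omega
          by_contra hw0z
          rw [ha1, hwz] at haw0pos
          have hw0x : w0 ≠ x := by
            intro he
            rw [he] at haw0pos
            simp only [Pi.add_apply, Pi.single_apply, if_pos rfl,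
              if_neg (fun h : x = z => hzx h.symm)] at haw0pos
            omega
          simp only [Pi.add_apply, Pi.single_apply, if_neg hw0x, if_neg hw0z] at haw0pos
          omega
      rw [← hw0z]
      simp only [app, Pi.add_apply]; omega
    have hoz := horder z
    simp only [app, Pi.add_apply] at hoz haviol
    omega

end IPS
end

section
/- If the flow problem P^x admits a solution, then it admits a solution f̃ such that f̃(b,a) = 0 for every b ∈ S_2^x and every a ∈ S_1^x. -/
open scoped ENNReal

namespace IPS

variable {S : Type*} [DecidableEq S]

/-- if the flow problem `P^x` admits a solution, then it admits a solution
`f̃` vanishing on `S_2^x × S_1^x`. -/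
theorem exists_solution_vanishing_on_S2_S1
    {S : Type*} [Countable S] [DecidableEq S]
    (nbr : S → S → Prop) (hsym : ∀ x y, nbr x y → nbr y x) (hirr : ∀ x, ¬ nbr x x)
    (W : Set ℤ) (hW : ∀ w ∈ W, 0 ≤ w)
    (η ξ : S → ℤ) (hηΩ : ∀ z, η z ∈ W) (hξΩ : ∀ z, ξ z ∈ W) (hle : η ≤ ξ)
    (x : S) (c1 c2 : (S → ℤ) → ℝ≥0∞)
    (hc1 : ∀ a, c1 a ≠ 0 → a ∈ ChangeSet nbr x ∧ Applicable W η a)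
    (hc2 : ∀ b, c2 b ≠ 0 → b ∈ ChangeSet nbr x ∧ Applicable W ξ b)
    (hfin : ∑' a : ChangeSet nbr x, (c1 a.1 + c2 a.1) ≠ ⊤)
    (f : (S → ℤ) → (S → ℤ) → ℝ≥0∞) (hfT : ∀ b a, f b a ≠ ⊤)
    (hf : IsSolution W nbr x η ξ c1 c2 f) :
    ∃ ft : (S → ℤ) → (S → ℤ) → ℝ≥0∞, (∀ b a, ft b a ≠ ⊤) ∧
      IsSolution W nbr x η ξ c1 c2 ft ∧
      ∀ b ∈ S2 W nbr x ξ, ∀ a ∈ S1 W nbr x η, ft b a = 0 := by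
  classical
  refine ⟨fun b a => if b ∈ S2 W nbr x ξ ∧ a ∈ S1 W nbr x η then 0 else f b a, ?_, ?_, ?_⟩
  · intro b a
    dsimp only
    split <;> simp [hfT]
  · have hS1R1 : ∀ a, a ∈ S1 W nbr x η → a ∉ R1 W nbr x η ξ := by
      intro a ha hr
      exact absurd ((ha.2.2.trans_le (hle x)).trans hr.2.2) (lt_irrefl _)
    have hS2R2 : ∀ b, b ∈ S2 W nbr x ξ → b ∉ R2 W nbr x η ξ := by
      intro b hb hr
      exact absurd ((hr.2.2.trans_le (hle x)).trans hb.2.2) (lt_irrefl _)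
    have hle' : ∀ b a, (if b ∈ S2 W nbr x ξ ∧ a ∈ S1 W nbr x η then 0 else f b a) ≤ f b a := by
      intro b a; split <;> simp
    constructor
    · intro b a h
      refine hf.domain b a ?_
      intro h0; apply h; split <;> simp [h0]
    · intro b a h
      refine hf.order b a ?_
      intro h0; apply h; split <;> simp [h0]
    · intro a ha
      rw [← hf.eq_R1 a ha]
      refine tsum_congr fun b => ?_
      rw [if_neg]
      rintro ⟨-, haS1⟩
      exact hS1R1 a haS1 ha
    · intro a ha
      exact (ENNReal.tsum_le_tsum fun (b : T2 W nbr x η ξ) => hle' b.1 a).trans (hf.le_S1 a ha)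
    · intro b hb
      rw [← hf.eq_R2 b hb]
      refine tsum_congr fun a => ?_
      rw [if_neg]
      rintro ⟨hbS2, -⟩
      exact hS2R2 b hbS2 hb
    · intro b hb
      exact (ENNReal.tsum_le_tsum fun (a : T1 W nbr x η ξ) => hle' b a.1).trans (hf.le_S2 b hb)
  · intro b hb a ha
    dsimp only
    rw [if_pos ⟨hb, ha⟩]

end IPS
end

section
/- The flow problems P_1^{xy+} and P_1^{xy-} are feasible. Precisely: (i) there exists g : B_2^{-xy} × (G_1^{-x} ∪ G_1^{-x•} ∪ B_1^{-xy}) → [0,∞) with g(b,a) = 0 unless η_a ≤ ξ_b, ∑_a g(b,a) = c^2_b for every b ∈ B_2^{-xy}, ∑_b g(b,a) ≤ f^x(B_2^{-xy}, a) for every a ∈ G_1^{-x} ∪ G_1^{-x•}, and ∑_b g(b,a) ≤ c^1_a for every a ∈ B_1^{-xy}; and (ii) there exists h : (G_2^{+x} ∪ G_2^{+x•} ∪ B_2^{+xy}) × B_1^{+xy} → [0,∞) with h(b,a) = 0 unless η_a ≤ ξ_b, ∑_b h(b,a) = c^1_a for every a ∈ B_1^{+xy}, ∑_a h(b,a) ≤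 c^2_b for every b ∈ B_2^{+xy}, and ∑_a h(b,a) ≤ f^x(b, B_1^{+xy}) for every b ∈ G_2^{+x} ∪ G_2^{+x•}. -/
open scoped ENNReal

namespace IPS

variable {S : Type*} [DecidableEq S]

section Helpers

private lemma tsum_set_mono' {X : Type*} {U V : Set X} (hUV : U ⊆ V) (F : X → ℝ≥0∞) :
    ∑' u : U, F u ≤ ∑' v : V, F v := by
  rw [tsum_subtype, tsum_subtype]
  exact ENNReal.tsum_le_tsum fun z =>
    Set.indicator_le_indicator_of_subset hUV (fun _ => zero_le) z

private lemma tsum_set_eq_of' {X : Type*} {U V : Set X} (hUV : U ⊆ V) (F : X → ℝ≥0∞)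
    (h0 : ∀ v ∈ V, v ∉ U → F v = 0) : ∑' v : V, F v = ∑' u : U, F u := by
  rw [tsum_subtype, tsum_subtype]
  refine tsum_congr fun z => ?_
  by_cases hz : z ∈ U
  · rw [Set.indicator_of_mem (hUV hz), Set.indicator_of_mem hz]
  · rw [Set.indicator_of_notMem hz]
    by_cases hz2 : z ∈ V
    · rw [Set.indicator_of_mem hz2]; exact h0 z hz2 hz
    · rw [Set.indicator_of_notMem hz2]

private lemma changeSet_neg {nbr : S → S → Prop} (hirr : ∀ u, ¬ nbr u u)
    {x : S} {δ : S → ℤ} (hδ : δ ∈ ChangeSet nbr x) (hx : δ x < 0) :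
    (∀ z, z ≠ x → δ z = 0) ∨
    ∃ z, nbr x z ∧ z ≠ x ∧ 0 < δ z ∧ ∀ w, w ≠ x → w ≠ z → δ w = 0 := by
  rcases hδ with ⟨k, hk, h | h⟩ | ⟨y, hy, k, l, hk, hl, h | h⟩
  · exfalso; rw [h, Pi.single_eq_same] at hx; omega
  · left; intro z hz; rw [h, Pi.single_eq_of_ne hz]
  · have hyx : y ≠ x := fun e => hirr x (e ▸ hy)
    exfalso
    rw [h, Pi.add_apply, Pi.single_eq_same, Pi.single_eq_of_ne hyx.symm] at hx
    omega
  · have hyx : y ≠ x := fun e => hirr x (e ▸ hy)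
    right
    refine ⟨y, hy, hyx, ?_, fun w hwx hwy => ?_⟩
    · rw [h, Pi.add_apply, Pi.single_eq_of_ne hyx, Pi.single_eq_same]; omega
    · rw [h, Pi.add_apply, Pi.single_eq_of_ne hwx, Pi.single_eq_of_ne hwy, add_zero]

private lemma changeSet_pos {nbr : S → S → Prop} (hirr : ∀ u, ¬ nbr u u)
    {x : S} {δ : S → ℤ} (hδ : δ ∈ ChangeSet nbr x) (hx : 0 < δ x) :
    (∀ z, z ≠ x → δ z = 0) ∨
    ∃ z, nbr x z ∧ z ≠ x ∧ δ z < 0 ∧ ∀ w, w ≠ x → w ≠ z → δ w = 0 := by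
  rcases hδ with ⟨k, hk, h | h⟩ | ⟨y, hy, k, l, hk, hl, h | h⟩
  · left; intro z hz; rw [h, Pi.single_eq_of_ne hz]
  · exfalso; rw [h, Pi.single_eq_same] at hx; omega
  · have hyx : y ≠ x := fun e => hirr x (e ▸ hy)
    right
    refine ⟨y, hy, hyx, ?_, fun w hwx hwy => ?_⟩
    · rw [h, Pi.add_apply, Pi.single_eq_of_ne hyx, Pi.single_eq_same]; omega
    · rw [h, Pi.add_apply, Pi.single_eq_of_ne hwx, Pi.single_eq_of_ne hwy, add_zero]
  · have hyx : y ≠ x := fun e => hirr x (e ▸ hy)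
    exfalso
    rw [h, Pi.add_apply, Pi.single_eq_same, Pi.single_eq_of_ne hyx.symm] at hx
    omega

end Helpers
private lemma g_part {S : Type*} [DecidableEq S]
    (nbr : S → S → Prop) (hirr : ∀ u, ¬ nbr u u)
    (W : Set ℤ) (η ξ : S → ℤ) (hle : η ≤ ξ)
    (x y : S) (hxy : nbr x y)
    (c1 c2 : (S → ℤ) → ℝ≥0∞)
    (fx : (S → ℤ) → (S → ℤ) → ℝ≥0∞) (hfxT : ∀ b a, fx b a ≠ ⊤)
    (hfx : IsSolution W nbr x η ξ c1 c2 fx) :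
    ∃ g : (S → ℤ) → (S → ℤ) → ℝ≥0∞, (∀ b a, g b a ≠ ⊤) ∧
      (∀ b a, g b a ≠ 0 →
        b ∈ B2 η ξ (CminusPair W nbr x ξ y) ∧
        a ∈ G1 η ξ (Cminus W nbr x η) ∪ G1 η ξ (CminusBull W nbr x η) ∪
            B1 η ξ (CminusPair W nbr x η y) ∧
        app η a ≤ app ξ b) ∧
      (∀ b ∈ B2 η ξ (CminusPair W nbr x ξ y),
        ∑' a : (G1 η ξ (Cminus W nbr x η) ∪ G1 η ξ (CminusBull W nbr x η) ∪
            B1 η ξ (CminusPair W nbr x η y) : Set (S → ℤ)), g b a.1 = c2 b) ∧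
      (∀ a ∈ G1 η ξ (Cminus W nbr x η) ∪ G1 η ξ (CminusBull W nbr x η),
        ∑' b : B2 η ξ (CminusPair W nbr x ξ y), g b.1 a ≤
          ∑' b : B2 η ξ (CminusPair W nbr x ξ y), fx b.1 a) ∧
      (∀ a ∈ B1 η ξ (CminusPair W nbr x η y),
        ∑' b : B2 η ξ (CminusPair W nbr x ξ y), g b.1 a ≤ c1 a) := by
  classical
  have hyx : y ≠ x := fun e => hirr x (e ▸ hxy)
  -- every b ∈ Bg has b x < 0, 0 < b y
  have hbneg : ∀ b ∈ B2 η ξ (CminusPair W nbr x ξ y), b x < 0 ∧ 0 < b y := by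
    rintro b ⟨⟨hbC, hbApp, hbx, hby⟩, hbB⟩
    simp only [app, Pi.add_apply] at hbx hby
    omega
  -- b vanishes off {x, y}
  have hBgzero : ∀ b ∈ B2 η ξ (CminusPair W nbr x ξ y), ∀ z, z ≠ x → z ≠ y → b z = 0 := by
    intro b hb z hzx hzy
    obtain ⟨hbx, hby⟩ := hbneg b hb
    rcases changeSet_neg hirr hb.1.1 hbx with hpure | ⟨z', hz', hz'x, hz'pos, hzero⟩
    · exact absurd (hpure y hyx) (by omega)
    · have hyz : y = z' := by
        by_contra hne
        exact absurd (hzero y hyx hne) (by omega)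
      exact hzero z hzx (hyz ▸ hzy)
  -- Bg ⊆ R2
  have hBgR2 : B2 η ξ (CminusPair W nbr x ξ y) ⊆ R2 W nbr x η ξ := by
    intro b hb
    obtain ⟨⟨hbC, hbApp, hbx, hby⟩, hbB⟩ := id hb
    obtain ⟨hbxneg, hbypos⟩ := hbneg b hb
    have hnn : ∀ z, z ≠ x → 0 ≤ b z := by
      intro z hz
      rcases changeSet_neg hirr hbC hbxneg with hpure | ⟨z', hz', hz'x, hz'pos, hzero⟩
      · rw [hpure z hz]
      · by_cases hzz : z = z'
        · exact le_of_lt (hzz ▸ hz'pos)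
        · rw [hzero z hz hzz]
    rw [Pi.le_def] at hbB
    push_neg at hbB
    obtain ⟨w, hw⟩ := hbB
    have hwx : w = x := by
      by_contra hne
      have h1 := hnn w hne
      have h2 : η w ≤ ξ w := hle w
      have h3 : app ξ b w < η w := hw
      simp only [app, Pi.add_apply] at h3
      omega
    exact ⟨hbC, hbApp, hwx ▸ hw⟩
  have hBgT2 : B2 η ξ (CminusPair W nbr x ξ y) ⊆ T2 W nbr x η ξ :=
    fun b hb => Or.inr (hBgR2 hb)
  -- Ug ⊆ S1 and T1
  have hUgS1 : (G1 η ξ (Cminus W nbr x η) ∪ G1 η ξ (CminusBull W nbr x η) ∪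
      B1 η ξ (CminusPair W nbr x η y)) ⊆ S1 W nbr x η := by
    intro a ha
    rcases ha with (hG | hG) | hB
    · obtain ⟨⟨haC, haApp, hax, -⟩, -⟩ := hG
      exact ⟨haC, haApp, hax⟩
    · obtain ⟨⟨z, hz, haC, haApp, hax, -⟩, -⟩ := hG
      exact ⟨haC, haApp, hax⟩
    · obtain ⟨⟨haC, haApp, hax, -⟩, -⟩ := hB
      exact ⟨haC, haApp, hax⟩
  have hUgT1 : (G1 η ξ (Cminus W nbr x η) ∪ G1 η ξ (CminusBull W nbr x η) ∪
      B1 η ξ (CminusPair W nbr x η y)) ⊆ T1 W nbr x η ξ :=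
    fun a ha => Or.inl (hUgS1 ha)
  -- classification
  have hclass : ∀ b ∈ B2 η ξ (CminusPair W nbr x ξ y), ∀ a, fx b a ≠ 0 →
      a ∈ G1 η ξ (Cminus W nbr x η) ∪ G1 η ξ (CminusBull W nbr x η) ∪
        B1 η ξ (CminusPair W nbr x η y) := by
    intro b hb a hne
    have horder := hfx.order b a hne
    have haT1 := (hfx.domain b a hne).2
    obtain ⟨⟨hbC, hbApp, hbx, hby⟩, hbB⟩ := id hb
    have haS1 : a ∈ S1 W nbr x η := by
      rcases haT1 with h | h
      · exact h
      · exfalso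
        have h1 : app η a x ≤ app ξ b x := horder x
        obtain ⟨-, -, h2⟩ := h
        simp only [app, Pi.add_apply] at h1 h2 hbx
        omega
    obtain ⟨haC, haApp, hax⟩ := haS1
    have haxneg : a x < 0 := by simp only [app, Pi.add_apply] at hax; omega
    rcases changeSet_neg hirr haC haxneg with hpure | ⟨z, hz, hzx, hzpos, hzero⟩
    · -- pure decrease at x: G1 (Cminus)
      left; left
      refine ⟨⟨haC, haApp, hax, fun w hw => ?_⟩, fun w => ?_⟩
      · simp only [app, Pi.add_apply, hpure w hw, add_zero]
      · by_cases hwx : w = x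
        · have h1 : η x ≤ ξ x := hle x
          simp only [app, Pi.add_apply, hwx] at hax ⊢
          omega
        · simp only [app, Pi.add_apply, hpure w hwx, add_zero]
          exact hle w
    · -- migration from x to z
      have hmem : a ∈ CminusPair W nbr x η z :=
        ⟨haC, haApp, hax, by simp only [app, Pi.add_apply]; omega⟩
      by_cases hG : app η a ≤ ξ
      · left; right
        exact ⟨⟨z, hz, hmem⟩, hG⟩
      · right
        rw [Pi.le_def] at hG
        push_neg at hG
        obtain ⟨w, hw⟩ := hG
        have hwz : w = z := by
          by_contra hne
          by_cases hwx : w = x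
          · have h1 : η x ≤ ξ x := hle x
            have h2 : ξ w < app η a w := hw
            simp only [app, Pi.add_apply, hwx] at h2 hax
            omega
          · have h1 := hzero w hwx hne
            have h2 : η w ≤ ξ w := hle w
            have h3 : ξ w < app η a w := hw
            simp only [app, Pi.add_apply] at h3
            omega
        have hzy : z = y := by
          by_contra hne2
          have h1 : app η a z ≤ app ξ b z := horder z
          have h2 := hBgzero b hb z hzx hne2
          have h3 : η z ≤ ξ z := hle z
          have h4 : ξ z < app η a z := hwz ▸ hw
          simp only [app, Pi.add_apply] at h1 h4
          omega
        refine ⟨⟨haC, haApp, hax, ?_⟩, fun hle' => ?_⟩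
        · rw [← hzy]
          simp only [app, Pi.add_apply]; omega
        · have h1 : app η a z ≤ ξ z := hle' z
          have h4 : ξ z < app η a z := hwz ▸ hw
          omega
  -- define g
  refine ⟨fun b a => if b ∈ B2 η ξ (CminusPair W nbr x ξ y) ∧
      a ∈ G1 η ξ (Cminus W nbr x η) ∪ G1 η ξ (CminusBull W nbr x η) ∪
        B1 η ξ (CminusPair W nbr x η y) then fx b a else 0, ?_, ?_, ?_, ?_, ?_⟩
  · intro b a
    dsimp only
    split_ifs with h
    · exact hfxT b a
    · exact ENNReal.zero_ne_top
  · intro b a hne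
    dsimp only at hne
    split_ifs at hne with h
    · exact ⟨h.1, h.2, hfx.order b a hne⟩
    · exact absurd rfl hne
  · intro b hb
    have h1 : ∀ a : (G1 η ξ (Cminus W nbr x η) ∪ G1 η ξ (CminusBull W nbr x η) ∪
        B1 η ξ (CminusPair W nbr x η y) : Set (S → ℤ)),
        (if b ∈ B2 η ξ (CminusPair W nbr x ξ y) ∧
          a.1 ∈ G1 η ξ (Cminus W nbr x η) ∪ G1 η ξ (CminusBull W nbr x η) ∪
            B1 η ξ (CminusPair W nbr x η y) then fx b a.1 else 0) = fx b a.1 :=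
      fun a => if_pos ⟨hb, a.2⟩
    rw [tsum_congr h1, ← tsum_set_eq_of' hUgT1 (fx b) fun a haT1 haU => by
      by_contra hne
      exact haU (hclass b hb a hne)]
    exact hfx.eq_R2 b (hBgR2 hb)
  · intro a _
    refine ENNReal.tsum_le_tsum fun b => ?_
    dsimp only
    split_ifs with h
    · exact le_rfl
    · exact zero_le
  · intro a ha
    have h1 : ∑' b : B2 η ξ (CminusPair W nbr x ξ y),
        (if b.1 ∈ B2 η ξ (CminusPair W nbr x ξ y) ∧
          a ∈ G1 η ξ (Cminus W nbr x η) ∪ G1 η ξ (CminusBull W nbr x η) ∪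
            B1 η ξ (CminusPair W nbr x η y) then fx b.1 a else 0) ≤
        ∑' b : B2 η ξ (CminusPair W nbr x ξ y), fx b.1 a := by
      refine ENNReal.tsum_le_tsum fun b => ?_
      split_ifs with h
      · exact le_rfl
      · exact zero_le
    refine le_trans h1 (le_trans (tsum_set_mono' hBgT2 fun b => fx b a) ?_)
    exact hfx.le_S1 a (hUgS1 (Or.inr ha))
private lemma h_part {S : Type*} [DecidableEq S]
    (nbr : S → S → Prop) (hirr : ∀ u, ¬ nbr u u)
    (W : Set ℤ) (η ξ : S → ℤ) (hle : η ≤ ξ)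
    (x y : S) (hxy : nbr x y)
    (c1 c2 : (S → ℤ) → ℝ≥0∞)
    (fx : (S → ℤ) → (S → ℤ) → ℝ≥0∞) (hfxT : ∀ b a, fx b a ≠ ⊤)
    (hfx : IsSolution W nbr x η ξ c1 c2 fx) :
    ∃ h : (S → ℤ) → (S → ℤ) → ℝ≥0∞, (∀ b a, h b a ≠ ⊤) ∧
      (∀ b a, h b a ≠ 0 →
        b ∈ G2 η ξ (Cplus W nbr x ξ) ∪ G2 η ξ (CplusBull W nbr x ξ) ∪
            B2 η ξ (CplusPair W nbr x ξ y) ∧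
        a ∈ B1 η ξ (CplusPair W nbr x η y) ∧
        app η a ≤ app ξ b) ∧
      (∀ a ∈ B1 η ξ (CplusPair W nbr x η y),
        ∑' b : (G2 η ξ (Cplus W nbr x ξ) ∪ G2 η ξ (CplusBull W nbr x ξ) ∪
            B2 η ξ (CplusPair W nbr x ξ y) : Set (S → ℤ)), h b.1 a = c1 a) ∧
      (∀ b ∈ B2 η ξ (CplusPair W nbr x ξ y),
        ∑' a : B1 η ξ (CplusPair W nbr x η y), h b a.1 ≤ c2 b) ∧
      (∀ b ∈ G2 η ξ (Cplus W nbr x ξ) ∪ G2 η ξ (CplusBull W nbr x ξ),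
        ∑' a : B1 η ξ (CplusPair W nbr x η y), h b a.1 ≤
          ∑' a : B1 η ξ (CplusPair W nbr x η y), fx b a.1) := by
  classical
  have hyx : y ≠ x := fun e => hirr x (e ▸ hxy)
  -- every a ∈ Ba has 0 < a x, a y < 0
  have hapos : ∀ a ∈ B1 η ξ (CplusPair W nbr x η y), 0 < a x ∧ a y < 0 := by
    rintro a ⟨⟨haC, haApp, hax, hay⟩, haB⟩
    simp only [app, Pi.add_apply] at hax hay
    omega
  -- a vanishes off {x, y}
  have hBazero : ∀ a ∈ B1 η ξ (CplusPair W nbr x η y), ∀ z, z ≠ x → z ≠ y → a z = 0 := by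
    intro a ha z hzx hzy
    obtain ⟨hax, hay⟩ := hapos a ha
    rcases changeSet_pos hirr ha.1.1 hax with hpure | ⟨z', hz', hz'x, hz'neg, hzero⟩
    · exact absurd (hpure y hyx) (by omega)
    · have hyz : y = z' := by
        by_contra hne
        exact absurd (hzero y hyx hne) (by omega)
      exact hzero z hzx (hyz ▸ hzy)
  -- Ba ⊆ R1
  have hBaR1 : B1 η ξ (CplusPair W nbr x η y) ⊆ R1 W nbr x η ξ := by
    intro a ha
    obtain ⟨⟨haC, haApp, hax, hay⟩, haB⟩ := id ha
    obtain ⟨haxpos, hayneg⟩ := hapos a ha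
    have hnp : ∀ z, z ≠ x → a z ≤ 0 := by
      intro z hz
      rcases changeSet_pos hirr haC haxpos with hpure | ⟨z', hz', hz'x, hz'neg, hzero⟩
      · rw [hpure z hz]
      · by_cases hzz : z = z'
        · exact le_of_lt (hzz ▸ hz'neg)
        · rw [hzero z hz hzz]
    rw [Pi.le_def] at haB
    push_neg at haB
    obtain ⟨w, hw⟩ := haB
    have hwx : w = x := by
      by_contra hne
      have h1 := hnp w hne
      have h2 : η w ≤ ξ w := hle w
      have h3 : ξ w < app η a w := hw
      simp only [app, Pi.add_apply] at h3
      omega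
    exact ⟨haC, haApp, hwx ▸ hw⟩
  have hBaT1 : B1 η ξ (CplusPair W nbr x η y) ⊆ T1 W nbr x η ξ :=
    fun a ha => Or.inr (hBaR1 ha)
  -- Uh ⊆ S2 and T2
  have hUhS2 : (G2 η ξ (Cplus W nbr x ξ) ∪ G2 η ξ (CplusBull W nbr x ξ) ∪
      B2 η ξ (CplusPair W nbr x ξ y)) ⊆ S2 W nbr x ξ := by
    intro b hb
    rcases hb with (hG | hG) | hB
    · obtain ⟨⟨hbC, hbApp, hbx, -⟩, -⟩ := hG
      exact ⟨hbC, hbApp, hbx⟩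
    · obtain ⟨⟨z, hz, hbC, hbApp, hbx, -⟩, -⟩ := hG
      exact ⟨hbC, hbApp, hbx⟩
    · obtain ⟨⟨hbC, hbApp, hbx, -⟩, -⟩ := hB
      exact ⟨hbC, hbApp, hbx⟩
  have hUhT2 : (G2 η ξ (Cplus W nbr x ξ) ∪ G2 η ξ (CplusBull W nbr x ξ) ∪
      B2 η ξ (CplusPair W nbr x ξ y)) ⊆ T2 W nbr x η ξ :=
    fun b hb => Or.inl (hUhS2 hb)
  -- classification
  have hclass : ∀ a ∈ B1 η ξ (CplusPair W nbr x η y), ∀ b, fx b a ≠ 0 →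
      b ∈ G2 η ξ (Cplus W nbr x ξ) ∪ G2 η ξ (CplusBull W nbr x ξ) ∪
        B2 η ξ (CplusPair W nbr x ξ y) := by
    intro a ha b hne
    have horder := hfx.order b a hne
    have hbT2 := (hfx.domain b a hne).1
    obtain ⟨⟨haC, haApp, hax, hay⟩, haB⟩ := id ha
    have hbS2 : b ∈ S2 W nbr x ξ := by
      rcases hbT2 with h | h
      · exact h
      · exfalso
        have h1 : app η a x ≤ app ξ b x := horder x
        obtain ⟨-, -, h2⟩ := h
        have h3 : η x ≤ ξ x := hle x
        simp only [app, Pi.add_apply] at h1 h2 hax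
        omega
    obtain ⟨hbC, hbApp, hbx⟩ := hbS2
    have hbxpos : 0 < b x := by simp only [app, Pi.add_apply] at hbx; omega
    rcases changeSet_pos hirr hbC hbxpos with hpure | ⟨z, hz, hzx, hzneg, hzero⟩
    · -- pure increase at x: G2 (Cplus)
      left; left
      refine ⟨⟨hbC, hbApp, hbx, fun w hw => ?_⟩, fun w => ?_⟩
      · simp only [app, Pi.add_apply, hpure w hw, add_zero]
      · by_cases hwx : w = x
        · have h1 : η x ≤ ξ x := hle x
          simp only [app, Pi.add_apply, hwx] at hbx ⊢
          omega
        · simp only [app, Pi.add_apply, hpure w hwx, add_zero]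
          exact hle w
    · -- migration from z to x
      have hmem : b ∈ CplusPair W nbr x ξ z :=
        ⟨hbC, hbApp, hbx, by simp only [app, Pi.add_apply]; omega⟩
      by_cases hG : η ≤ app ξ b
      · left; right
        exact ⟨⟨z, hz, hmem⟩, hG⟩
      · right
        rw [Pi.le_def] at hG
        push_neg at hG
        obtain ⟨w, hw⟩ := hG
        have hwz : w = z := by
          by_contra hne2
          by_cases hwx : w = x
          · have h1 : η x ≤ ξ x := hle x
            have h2 : app ξ b w < η w := hw
            simp only [app, Pi.add_apply, hwx] at h2 hbx
            omega
          · have h1 := hzero w hwx hne2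
            have h2 : η w ≤ ξ w := hle w
            have h3 : app ξ b w < η w := hw
            simp only [app, Pi.add_apply] at h3
            omega
        have hzy : z = y := by
          by_contra hne2
          have h1 : app η a z ≤ app ξ b z := horder z
          have h2 := hBazero a ha z hzx hne2
          have h3 : η z ≤ ξ z := hle z
          have h4 : app ξ b z < η z := hwz ▸ hw
          simp only [app, Pi.add_apply] at h1 h4
          omega
        refine ⟨⟨hbC, hbApp, hbx, ?_⟩, fun hle' => ?_⟩
        · rw [← hzy]
          simp only [app, Pi.add_apply]; omega
        · have h1 : η z ≤ app ξ b z := hle' z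
          have h4 : app ξ b z < η z := hwz ▸ hw
          omega
  -- define h
  refine ⟨fun b a => if b ∈ G2 η ξ (Cplus W nbr x ξ) ∪ G2 η ξ (CplusBull W nbr x ξ) ∪
      B2 η ξ (CplusPair W nbr x ξ y) ∧
      a ∈ B1 η ξ (CplusPair W nbr x η y) then fx b a else 0, ?_, ?_, ?_, ?_, ?_⟩
  · intro b a
    dsimp only
    split_ifs with h
    · exact hfxT b a
    · exact ENNReal.zero_ne_top
  · intro b a hne
    dsimp only at hne
    split_ifs at hne with h
    · exact ⟨h.1, h.2, hfx.order b a hne⟩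
    · exact absurd rfl hne
  · intro a ha
    have h1 : ∀ b : (G2 η ξ (Cplus W nbr x ξ) ∪ G2 η ξ (CplusBull W nbr x ξ) ∪
        B2 η ξ (CplusPair W nbr x ξ y) : Set (S → ℤ)),
        (if b.1 ∈ G2 η ξ (Cplus W nbr x ξ) ∪ G2 η ξ (CplusBull W nbr x ξ) ∪
            B2 η ξ (CplusPair W nbr x ξ y) ∧
          a ∈ B1 η ξ (CplusPair W nbr x η y) then fx b.1 a else 0) = fx b.1 a :=
      fun b => if_pos ⟨b.2, ha⟩
    rw [tsum_congr h1, ← tsum_set_eq_of' hUhT2 (fun b => fx b a) fun b hbT2 hbU => by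
      by_contra hne
      exact hbU (hclass a ha b hne)]
    exact hfx.eq_R1 a (hBaR1 ha)
  · intro b hb
    have h1 : ∑' a : B1 η ξ (CplusPair W nbr x η y),
        (if b ∈ G2 η ξ (Cplus W nbr x ξ) ∪ G2 η ξ (CplusBull W nbr x ξ) ∪
            B2 η ξ (CplusPair W nbr x ξ y) ∧
          a.1 ∈ B1 η ξ (CplusPair W nbr x η y) then fx b a.1 else 0) ≤
        ∑' a : B1 η ξ (CplusPair W nbr x η y), fx b a.1 := by
      refine ENNReal.tsum_le_tsum fun a => ?_
      split_ifs with h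
      · exact le_rfl
      · exact zero_le
    refine le_trans h1 (le_trans (tsum_set_mono' hBaT1 (fx b)) ?_)
    exact hfx.le_S2 b (hUhS2 (Or.inr hb))
  · intro b _
    refine ENNReal.tsum_le_tsum fun a => ?_
    dsimp only
    split_ifs with h
    · exact le_rfl
    · exact zero_le
/-- the flow problems `P_1^{xy+}` and `P_1^{xy-}` are feasible. -/
theorem feasibility_of_P1xy
    {S : Type*} [Countable S] [DecidableEq S]
    (nbr : S → S → Prop) (hsym : ∀ u v, nbr u v → nbr v u) (hirr : ∀ u, ¬ nbr u u)
    (W : Set ℤ) (hW : ∀ w ∈ W, 0 ≤ w)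
    (η ξ : S → ℤ) (hηΩ : ∀ z, η z ∈ W) (hξΩ : ∀ z, ξ z ∈ W) (hle : η ≤ ξ)
    (x y : S) (hxy : nbr x y)
    (c1 c2 : (S → ℤ) → ℝ≥0∞)
    (hc1 : ∀ a, c1 a ≠ 0 → a ∈ ChangeSet nbr x ∪ ChangeSet nbr y ∧ Applicable W η a)
    (hc2 : ∀ b, c2 b ≠ 0 → b ∈ ChangeSet nbr x ∪ ChangeSet nbr y ∧ Applicable W ξ b)
    (hfin : ∑' a : (ChangeSet nbr x ∪ ChangeSet nbr y : Set (S → ℤ)), (c1 a.1 + c2 a.1) ≠ ⊤)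
    (fx : (S → ℤ) → (S → ℤ) → ℝ≥0∞) (hfxT : ∀ b a, fx b a ≠ ⊤)
    (hfx : IsSolution W nbr x η ξ c1 c2 fx)
    (hfx0 : ∀ b ∈ S2 W nbr x ξ, ∀ a ∈ S1 W nbr x η, fx b a = 0)
    (fy : (S → ℤ) → (S → ℤ) → ℝ≥0∞) (hfyT : ∀ b a, fy b a ≠ ⊤)
    (hfy : IsSolution W nbr y η ξ c1 c2 fy)
    (hfy0 : ∀ b ∈ S2 W nbr y ξ, ∀ a ∈ S1 W nbr y η, fy b a = 0)
    :
    (∃ g : (S → ℤ) → (S → ℤ) → ℝ≥0∞, (∀ b a, g b a ≠ ⊤) ∧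
      (∀ b a, g b a ≠ 0 →
        b ∈ B2 η ξ (CminusPair W nbr x ξ y) ∧
        a ∈ G1 η ξ (Cminus W nbr x η) ∪ G1 η ξ (CminusBull W nbr x η) ∪
            B1 η ξ (CminusPair W nbr x η y) ∧
        app η a ≤ app ξ b) ∧
      (∀ b ∈ B2 η ξ (CminusPair W nbr x ξ y),
        ∑' a : (G1 η ξ (Cminus W nbr x η) ∪ G1 η ξ (CminusBull W nbr x η) ∪
            B1 η ξ (CminusPair W nbr x η y) : Set (S → ℤ)), g b a.1 = c2 b) ∧
      (∀ a ∈ G1 η ξ (Cminus W nbr x η) ∪ G1 η ξ (CminusBull W nbr x η),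
        ∑' b : B2 η ξ (CminusPair W nbr x ξ y), g b.1 a ≤
          ∑' b : B2 η ξ (CminusPair W nbr x ξ y), fx b.1 a) ∧
      (∀ a ∈ B1 η ξ (CminusPair W nbr x η y),
        ∑' b : B2 η ξ (CminusPair W nbr x ξ y), g b.1 a ≤ c1 a)) ∧
    (∃ h : (S → ℤ) → (S → ℤ) → ℝ≥0∞, (∀ b a, h b a ≠ ⊤) ∧
      (∀ b a, h b a ≠ 0 →
        b ∈ G2 η ξ (Cplus W nbr x ξ) ∪ G2 η ξ (CplusBull W nbr x ξ) ∪
            B2 η ξ (CplusPair W nbr x ξ y) ∧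
        a ∈ B1 η ξ (CplusPair W nbr x η y) ∧
        app η a ≤ app ξ b) ∧
      (∀ a ∈ B1 η ξ (CplusPair W nbr x η y),
        ∑' b : (G2 η ξ (Cplus W nbr x ξ) ∪ G2 η ξ (CplusBull W nbr x ξ) ∪
            B2 η ξ (CplusPair W nbr x ξ y) : Set (S → ℤ)), h b.1 a = c1 a) ∧
      (∀ b ∈ B2 η ξ (CplusPair W nbr x ξ y),
        ∑' a : B1 η ξ (CplusPair W nbr x η y), h b a.1 ≤ c2 b) ∧
      (∀ b ∈ G2 η ξ (Cplus W nbr x ξ) ∪ G2 η ξ (CplusBull W nbr x ξ),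
        ∑' a : B1 η ξ (CplusPair W nbr x η y), h b a.1 ≤
          ∑' a : B1 η ξ (CplusPair W nbr x η y), fx b a.1)) := by
  exact ⟨g_part nbr hirr W η ξ hle x y hxy c1 c2 fx hfxT hfx,
         h_part nbr hirr W η ξ hle x y hxy c1 c2 fx hfxT hfx⟩

end IPS
end
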